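/- arXiv:2409.04305 — 2 statements merged into one kernel-verified Lean document; each statement's English description precedes it below -/
import Mathlib

section
/- Let t be a nonzero real number, and let (m_{2k})_{k≥1} and (a_{2n})_{n≥1} be real sequences satisfying the formal power series identity exp(t Σ_{k≥1} (m_{2k}/k) z^{2k}) = 1 + Σ_{n≥1} a_{2n} z^{2n} in ℝ[[z]]. Then for every n ≥ 1: a_{2n} = (1/(2n)!) · Σ_{π ∈ P^even(2n)} ((2t)^{#(π)} Π_{B∈π} (|B|−1)!) · m_π, and m_{2n} = (1/(2(2n−1)!·t)) · Σ_{π ∈ P^even(2n)} ((−1)^{#(π)−1} (#(π)−1)! Π_{B∈π} |B|!) · a_π. -/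
open Finset

/-- All blocks have even cardinality. -/
def IsEvenPartition {n : ℕ} (π : Finpartition (Finset.univ : Finset (Fin n))) : Prop :=
  ∀ B ∈ π.parts, Even B.card

open Classical in
/-- The finite set of even set partitions of `[n]`. -/
noncomputable def evenPartitions (n : ℕ) :
    Finset (Finpartition (Finset.univ : Finset (Fin n))) :=
  Finset.univ.filter IsEvenPartition

/-- Formal exponential of a power series with zero constant term. -/
noncomputable def fexp (F : PowerSeries ℝ) : PowerSeries ℝ :=
  PowerSeries.mk fun n =>
    ∑ k ∈ Finset.range (n + 1), (PowerSeries.coeff n (F ^ k)) / (k.factorial : ℝ)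

/-- The series `Σ_{k≥1} (x_k/k) z^{2k}` associated to a sequence `(x_{2k})_{k≥1}`
(where `x k` stands for `x_{2k}`). -/
noncomputable def evenSeries (x : ℕ → ℝ) : PowerSeries ℝ :=
  PowerSeries.mk fun j => if j ≠ 0 ∧ j % 2 = 0 then x (j / 2) / ((j / 2 : ℕ) : ℝ) else 0

/-- The series `1 + Σ_{n≥1} a_{2n} z^{2n}` (where `a n` stands for `a_{2n}`). -/
noncomputable def coeffSeries (a : ℕ → ℝ) : PowerSeries ℝ :=
  PowerSeries.mk fun j =>
    if j = 0 then 1 else if j % 2 = 0 then a (j / 2) else 0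


open PowerSeries

section Aux

lemma coeff_pow_zero_of_lt {F : PowerSeries ℝ} (hF : constantCoeff F = 0)
    {n k : ℕ} (h : n < k) : coeff n (F ^ k) = 0 := by
  obtain ⟨G, rfl⟩ := X_dvd_iff.2 hF
  rw [mul_pow, coeff_X_pow_mul']
  simp [Nat.not_le_of_lt h]

lemma coeff_succ_pow_succ (F : PowerSeries ℝ) (n k : ℕ) :
    ((n : ℝ) + 1) * coeff (n+1) (F ^ (k+1)) =
      ((k : ℝ) + 1) * coeff n (F ^ k * d⁄dX ℝ F) := by
  have h := Derivation.leibniz_pow (d⁄dX ℝ) (a := F) (k+1)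
  have h2 := congrArg (coeff n) h
  rw [coeff_derivative] at h2
  simp only [Nat.add_sub_cancel, smul_eq_mul, nsmul_eq_mul] at h2
  rw [mul_comm, h2, ← map_natCast C (k+1), coeff_C_mul]
  push_cast
  ring

lemma coeff_fexp {F : PowerSeries ℝ} (hF : constantCoeff F = 0) {n N : ℕ} (h : n < N) :
    coeff n (fexp F) = ∑ k ∈ range N, coeff n (F ^ k) / (k.factorial : ℝ) := by
  rw [fexp, coeff_mk]
  apply Finset.sum_subset
  · exact Finset.range_subset_range.2 h
  · intro k _ hk
    rw [coeff_pow_zero_of_lt hF (by simpa using hk)]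
    simp

lemma constantCoeff_fexp (F : PowerSeries ℝ) : constantCoeff (fexp F) = 1 := by
  rw [← coeff_zero_eq_constantCoeff, fexp, coeff_mk]
  simp

lemma fexp_deriv {F : PowerSeries ℝ} (hF : constantCoeff F = 0) :
    d⁄dX ℝ (fexp F) = d⁄dX ℝ F * fexp F := by
  ext n
  have lhs : coeff n (d⁄dX ℝ (fexp F))
      = ∑ k ∈ range (n+1), coeff n (F ^ k * d⁄dX ℝ F) / (k.factorial : ℝ) := by
    rw [coeff_derivative, coeff_fexp hF (Nat.lt_succ_self _), Finset.sum_mul,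
      Finset.sum_range_succ']
    have h0 : coeff (n+1) (F ^ 0) = 0 := by simp
    rw [h0]
    simp only [zero_div, zero_mul, add_zero]
    apply Finset.sum_congr rfl
    intro k _
    have := coeff_succ_pow_succ F n k
    have hk : ((k+1).factorial : ℝ) = ((k:ℝ)+1) * (k.factorial : ℝ) := by
      rw [Nat.factorial_succ]; push_cast; ring
    rw [hk]
    field_simp
    nlinarith [this, Nat.factorial_pos k]
  rw [lhs, coeff_mul]
  have : ∀ p ∈ antidiagonal n, coeff p.1 (d⁄dX ℝ F) * coeff p.2 (fexp F)
      = ∑ k ∈ range (n+1), coeff p.1 (d⁄dX ℝ F) * coeff p.2 (F ^ k) / (k.factorial : ℝ) := by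
    intro p hp
    rw [coeff_fexp hF (Nat.lt_succ_of_le (Finset.HasAntidiagonal.antidiagonal.snd_le hp)), Finset.mul_sum]
    simp [mul_div_assoc]
  rw [Finset.sum_congr rfl this, Finset.sum_comm]
  apply Finset.sum_congr rfl
  intro k _
  rw [mul_comm (F ^ k), coeff_mul, Finset.sum_div]

lemma coeff_pow_mul_zero_of_lt {E : PowerSeries ℝ} (hE : constantCoeff E = 0)
    (H : PowerSeries ℝ) {n k : ℕ} (h : n < k) : coeff n (E ^ k * H) = 0 := by
  obtain ⟨G, rfl⟩ := X_dvd_iff.2 hE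
  rw [mul_pow, mul_assoc, coeff_X_pow_mul']
  simp [Nat.not_le_of_lt h]

noncomputable def flog (A : PowerSeries ℝ) : PowerSeries ℝ :=
  PowerSeries.mk fun n =>
    ∑ k ∈ Finset.range (n + 1), (-1 : ℝ) ^ (k - 1) * coeff n ((A - 1) ^ k) / (k : ℝ)

lemma constantCoeff_flog (A : PowerSeries ℝ) : constantCoeff (flog A) = 0 := by
  rw [← coeff_zero_eq_constantCoeff, flog, coeff_mk]
  simp

lemma coeff_flog {A : PowerSeries ℝ} (hA : constantCoeff A = 1) {n N : ℕ} (h : n < N) :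
    coeff n (flog A) = ∑ k ∈ range N, (-1 : ℝ) ^ (k - 1) * coeff n ((A - 1) ^ k) / (k : ℝ) := by
  have hE : constantCoeff (A - 1) = 0 := by simp [hA]
  rw [flog, coeff_mk]
  apply Finset.sum_subset (Finset.range_subset_range.2 h)
  intro k _ hk
  rw [show coeff n ((A-1)^k) = 0 by
    simpa using coeff_pow_mul_zero_of_lt hE 1 (by simpa using hk)]
  simp

lemma flog_deriv {A : PowerSeries ℝ} (hA : constantCoeff A = 1) :
    d⁄dX ℝ (flog A) * A = d⁄dX ℝ A := by
  have hE : constantCoeff (A - 1) = 0 := by simp [hA]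
  have hdE : d⁄dX ℝ (A - 1) = d⁄dX ℝ A := by
    rw [map_sub, Derivation.map_one_eq_zero, sub_zero]
  ext n
  have key : ∀ i ≤ n, coeff i (d⁄dX ℝ (flog A)) =
      coeff i (∑ j ∈ range (n+1), ((-1:ℝ)^j) • ((A - 1) ^ j * d⁄dX ℝ A)) := by
    intro i hi
    rw [coeff_derivative, coeff_flog hA (show i + 1 < n + 2 by omega), Finset.sum_mul,
      Finset.sum_range_succ']
    have h0 : coeff (i+1) ((A - 1) ^ 0) = 0 := by simp
    rw [h0, map_sum]
    norm_num
    apply Finset.sum_congr rfl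
    intro j _
    have hc := coeff_succ_pow_succ (A - 1) i j
    rw [hdE] at hc
    have hj : ((j:ℝ)+1) ≠ 0 := by positivity
    field_simp
    linear_combination hc
  have tele : (∑ j ∈ range (n+1), ((-1:ℝ)^j) • ((A - 1) ^ j * d⁄dX ℝ A)) * A
      = d⁄dX ℝ A - ((-1:ℝ)^(n+1)) • ((A - 1) ^ (n+1) * d⁄dX ℝ A) := by
    have step : ∀ j, (((-1:ℝ)^j) • ((A - 1) ^ j * d⁄dX ℝ A)) * A
        = ((-1:ℝ)^j) • ((A - 1) ^ j * d⁄dX ℝ A)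
          - ((-1:ℝ)^(j+1)) • ((A - 1) ^ (j+1) * d⁄dX ℝ A) := by
      intro j
      simp only [smul_eq_C_mul, map_pow, map_neg, map_one]
      ring
    rw [Finset.sum_mul, Finset.sum_congr rfl (fun j _ => step j), Finset.sum_range_sub']
    simp
  rw [coeff_mul,
    Finset.sum_congr rfl (fun p hp => by
      rw [key p.1 (Finset.HasAntidiagonal.antidiagonal.fst_le hp)]), ← coeff_mul, tele, map_sub, coeff_smul,
    coeff_pow_mul_zero_of_lt hE _ (Nat.lt_succ_self n)]
  simp

lemma flog_fexp {F : PowerSeries ℝ} (hF : constantCoeff F = 0) : flog (fexp F) = F := by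
  have hA := constantCoeff_fexp F
  apply PowerSeries.derivative.ext
  · have h1 := flog_deriv hA
    rw [fexp_deriv hF] at h1
    have hne : fexp F ≠ 0 := fun h => by simp [h] at hA
    exact mul_right_cancel₀ hne h1
  · rw [constantCoeff_flog, hF]

variable {α : Type*} [DecidableEq α] {s : Finset α}

lemma avoid_part_parts (π : Finpartition s) {x : α} (hx : x ∈ s) :
    (π.avoid (π.part x)).parts = π.parts.erase (π.part x) := by
  ext c
  simp only [Finpartition.mem_avoid, mem_erase]
  constructor
  · rintro ⟨d, hd, hnle, rfl⟩
    have hne : d ≠ π.part x := fun h => hnle (h ▸ le_refl _)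
    have hdisj : Disjoint d (π.part x) := π.disjoint hd (π.part_mem.2 hx) hne
    rw [Finset.sdiff_eq_self_iff_disjoint.2 hdisj]
    exact ⟨hne, hd⟩
  · rintro ⟨hne, hc⟩
    have hdisj : Disjoint c (π.part x) := π.disjoint hc (π.part_mem.2 hx) hne
    refine ⟨c, hc, ?_, Finset.sdiff_eq_self_iff_disjoint.2 hdisj⟩
    intro hle
    exact π.bot_notMem (by rwa [hdisj.eq_bot_of_le hle] at hc)

lemma extend_avoid {B : Finset α} (π' : Finpartition (s \ B)) (hb : B ≠ ⊥)
    (hab : Disjoint (s \ B) B) (hc : (s \ B) ⊔ B = s) :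
    (π'.extend hb hab hc).avoid B = π' := by
  ext c
  simp only [Finpartition.mem_avoid, Finpartition.extend_parts, mem_insert]
  constructor
  · rintro ⟨d, hd | hd, hnle, rfl⟩
    · exact absurd (hd ▸ le_refl B) hnle
    · have hdisj : Disjoint d B := hab.mono_left (π'.le hd)
      rwa [Finset.sdiff_eq_self_iff_disjoint.2 hdisj]
  · intro hc'
    have hdisj : Disjoint c B := hab.mono_left (π'.le hc')
    refine ⟨c, Or.inr hc', ?_, Finset.sdiff_eq_self_iff_disjoint.2 hdisj⟩
    intro hle
    exact π'.bot_notMem (by rwa [hdisj.eq_bot_of_le hle] at hc')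

lemma main_comb {F : PowerSeries ℝ} (hF : constantCoeff F = 0) :
    ∀ (d : ℕ) (s : Finset α) (_ : s.card = d) (c : ℕ → ℝ),
    (∑ π : Finpartition s, c π.parts.card *
        ∏ B ∈ π.parts, ((B.card.factorial : ℝ) * coeff B.card F))
      = ∑ k ∈ range (d+1), c k * ((d.factorial : ℝ) / (k.factorial : ℝ)) * coeff d (F^k) := by
  intro d
  induction d using Nat.strong_induction_on with
  | _ d IH =>
  intro s hs c
  obtain _ | d := d
  · rw [Finset.card_eq_zero] at hs
    subst hs
    have h1 : ∀ π : Finpartition (∅ : Finset α), π.parts = ∅ := fun π =>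
      Finpartition.parts_eq_empty_iff.2 bot_eq_empty.symm
    have h2 : (univ : Finset (Finpartition (∅ : Finset α))) = {(default : Finpartition (⊥ : Finset α))} := by
      refine Finset.eq_singleton_iff_unique_mem.2 ⟨mem_univ _, fun y _ => ?_⟩
      apply Finpartition.ext
      rw [h1, h1]
    rw [h2, Finset.sum_singleton, h1]
    simp
  · have hpos : 0 < s.card := hs ▸ d.succ_pos
    obtain ⟨x, hx⟩ := Finset.card_pos.1 hpos
    -- Step A : decompose partitions by the block containing x
    have stepA : (∑ π : Finpartition s, c π.parts.card *
          ∏ B ∈ π.parts, ((B.card.factorial : ℝ) * coeff B.card F))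
        = ∑ p ∈ (s.powerset.filter fun B => x ∈ B).sigma
            (fun B => (univ : Finset (Finpartition (s \ B)))),
            c (p.2.parts.card + 1) * (((p.1.card.factorial : ℝ) * coeff p.1.card F) *
              ∏ B ∈ p.2.parts, ((B.card.factorial : ℝ) * coeff B.card F)) := by
      have hsub : ∀ p : (Σ B : Finset α, Finpartition (s \ B)),
          p ∈ (s.powerset.filter fun B => x ∈ B).sigma
            (fun B => (univ : Finset (Finpartition (s \ B)))) → p.1 ⊆ s ∧ x ∈ p.1 := by
        intro p hp
        rw [mem_sigma, mem_filter, mem_powerset] at hp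
        exact ⟨hp.1.1, hp.1.2⟩
      refine Finset.sum_bij' (fun π _ => ⟨π.part x, π.avoid (π.part x)⟩)
        (fun p hp => p.2.extend (b := p.1)
          (by intro hbot; have := (hsub p hp).2; rw [hbot] at this; simp at this)
          sdiff_disjoint (by rw [sup_eq_union, Finset.sdiff_union_of_subset (hsub p hp).1]))
        ?_ ?_ ?_ ?_ ?_
      · intro π _
        rw [mem_sigma, mem_filter, mem_powerset]
        exact ⟨⟨π.le (π.part_mem.2 hx), π.mem_part hx⟩, mem_univ _⟩
      · intro p hp
        exact mem_univ _
      · intro π _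
        apply Finpartition.ext
        rw [Finpartition.extend_parts, avoid_part_parts π hx,
          Finset.insert_erase (π.part_mem.2 hx)]
      · rintro ⟨B, π'⟩ hp
        obtain ⟨hBs0, hxB0⟩ := hsub ⟨B, π'⟩ hp
        have hBs : B ⊆ s := hBs0
        have hxB : x ∈ B := hxB0
        have h1 : B ≠ ⊥ := by intro hbot; rw [hbot] at hxB; simp at hxB
        have h2 : Disjoint (s \ B) B := sdiff_disjoint
        have h3 : (s \ B) ⊔ B = s := by
          rw [sup_eq_union, Finset.sdiff_union_of_subset hBs]
        show (⟨(π'.extend h1 h2 h3).part x,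
            (π'.extend h1 h2 h3).avoid ((π'.extend h1 h2 h3).part x)⟩ :
            Σ B : Finset α, Finpartition (s \ B)) = ⟨B, π'⟩
        have hpart : (π'.extend h1 h2 h3).part x = B :=
          (π'.extend h1 h2 h3).part_eq_of_mem
            (by rw [Finpartition.extend_parts]; exact Finset.mem_insert_self _ _) hxB
        rw [hpart, extend_avoid]
      · intro π _
        have hcard : π.parts.card = (π.avoid (π.part x)).parts.card + 1 := by
          rw [avoid_part_parts π hx, Finset.card_erase_of_mem (π.part_mem.2 hx)]
          have : 0 < π.parts.card := Finset.card_pos.2 ⟨_, π.part_mem.2 hx⟩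
          omega
        rw [hcard, avoid_part_parts π hx,
          ← Finset.mul_prod_erase π.parts _ (π.part_mem.2 hx)]
    rw [stepA, Finset.sum_sigma]
    have stepB : ∀ B ∈ s.powerset.filter (fun B => x ∈ B),
        (∑ π' : Finpartition (s \ B), c (π'.parts.card + 1) *
          (((B.card.factorial : ℝ) * coeff B.card F) *
            ∏ B' ∈ π'.parts, ((B'.card.factorial : ℝ) * coeff B'.card F)))
        = ((B.card.factorial : ℝ) * coeff B.card F) *
            ∑ k ∈ range ((s \ B).card + 1), c (k+1) *
              (((s \ B).card.factorial : ℝ) / (k.factorial : ℝ)) * coeff ((s \ B).card) (F^k) := by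
      intro B hB
      rw [mem_filter, mem_powerset] at hB
      have hcard : (s \ B).card < d + 1 := by
        rw [Finset.card_sdiff_of_subset hB.1]
        have h1 : 0 < B.card := Finset.card_pos.2 ⟨x, hB.2⟩
        have h2 : B.card ≤ s.card := Finset.card_le_card hB.1
        omega
      rw [← IH _ hcard _ rfl (fun k => c (k+1)), Finset.mul_sum]
      apply Finset.sum_congr rfl
      intro π' _
      ring
    rw [Finset.sum_congr rfl stepB]
    -- Step C : reindex over subsets of s.erase x
    have stepC : ∑ B ∈ s.powerset.filter (fun B => x ∈ B),
        ((B.card.factorial : ℝ) * coeff B.card F) *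
            ∑ k ∈ range ((s \ B).card + 1), c (k+1) *
              (((s \ B).card.factorial : ℝ) / (k.factorial : ℝ)) * coeff ((s \ B).card) (F^k)
        = ∑ B' ∈ (s.erase x).powerset,
          (((B'.card + 1).factorial : ℝ) * coeff (B'.card + 1) F) *
            ∑ k ∈ range ((d - B'.card) + 1), c (k+1) *
              (((d - B'.card).factorial : ℝ) / (k.factorial : ℝ)) * coeff (d - B'.card) (F^k) := by
      refine Finset.sum_bij' (fun B _ => B.erase x) (fun B' _ => insert x B') ?_ ?_ ?_ ?_ ?_
      · intro B hB
        rw [mem_filter, mem_powerset] at hB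
        exact Finset.mem_powerset.2 (Finset.erase_subset_erase x hB.1)
      · intro B' hB'
        rw [Finset.mem_powerset] at hB'
        rw [mem_filter, mem_powerset]
        refine ⟨Finset.insert_subset hx (hB'.trans (Finset.erase_subset x s)), Finset.mem_insert_self _ _⟩
      · intro B hB
        rw [mem_filter] at hB
        exact Finset.insert_erase hB.2
      · intro B' hB'
        rw [Finset.mem_powerset] at hB'
        exact Finset.erase_insert (fun hxB' => Finset.notMem_erase x s (hB' hxB'))
      · intro B hB
        rw [mem_filter, mem_powerset] at hB
        have h1 : 0 < B.card := Finset.card_pos.2 ⟨x, hB.2⟩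
        have h2 : B.card ≤ s.card := Finset.card_le_card hB.1
        have hc1 : (B.erase x).card + 1 = B.card := by
          rw [Finset.card_erase_of_mem hB.2]; omega
        have hc2 : d - (B.erase x).card = (s \ B).card := by
          rw [Finset.card_sdiff_of_subset hB.1, Finset.card_erase_of_mem hB.2, hs]; omega
        rw [hc1, hc2]
    rw [stepC, Finset.sum_powerset_apply_card
      (fun q => (((q + 1).factorial : ℝ) * coeff (q + 1) F) *
            ∑ k ∈ range ((d - q) + 1), c (k+1) *
              (((d - q).factorial : ℝ) / (k.factorial : ℝ)) * coeff (d - q) (F^k))]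
    have hcs : (s.erase x).card = d := by rw [Finset.card_erase_of_mem hx, hs]; omega
    rw [hcs]
    -- Step D : pure computation
    rw [Finset.sum_range_succ' (fun k => c k * (((d+1).factorial : ℝ) / (k.factorial : ℝ))
      * coeff (d+1) (F^k))]
    have h0 : coeff (d+1) (F^0) = 0 := by
      rw [pow_zero, coeff_one]; simp
    rw [h0]
    simp only [mul_zero, add_zero]
    have hRk : ∀ k ∈ range (d+1), c (k+1) * (((d+1).factorial : ℝ) / ((k+1).factorial : ℝ))
        * coeff (d+1) (F^(k+1))
        = ∑ q ∈ range (d+1), c (k+1) * ((d.factorial : ℝ) / (k.factorial : ℝ)) *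
            (((q:ℝ)+1) * coeff (q+1) F * coeff (d-q) (F^k)) := by
      intro k _
      have hc := coeff_succ_pow_succ F d k
      have hm : coeff d (F^k * d⁄dX ℝ F)
          = ∑ q ∈ range (d+1), ((q:ℝ)+1) * coeff (q+1) F * coeff (d-q) (F^k) := by
        rw [mul_comm, coeff_mul, Finset.Nat.sum_antidiagonal_eq_sum_range_succ_mk]
        apply Finset.sum_congr rfl
        intro q _
        rw [coeff_derivative]
        ring
      rw [← Finset.mul_sum, ← hm]
      have hd1 : ((d+1).factorial : ℝ) = ((d:ℝ)+1) * (d.factorial : ℝ) := by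
        rw [Nat.factorial_succ]; push_cast; ring
      have hk1 : ((k+1).factorial : ℝ) = ((k:ℝ)+1) * (k.factorial : ℝ) := by
        rw [Nat.factorial_succ]; push_cast; ring
      have hdf : (d.factorial : ℝ) ≠ 0 := Nat.cast_ne_zero.2 d.factorial_ne_zero
      have hkf : (k.factorial : ℝ) ≠ 0 := Nat.cast_ne_zero.2 k.factorial_ne_zero
      have hd0 : ((d:ℝ)+1) ≠ 0 := by positivity
      have hk0 : ((k:ℝ)+1) ≠ 0 := by positivity
      rw [hd1, hk1]
      field_simp
      linear_combination c (k+1) * hc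
    rw [Finset.sum_congr rfl hRk, Finset.sum_comm]
    apply Finset.sum_congr rfl
    intro q hq
    rw [Finset.mem_range] at hq
    have hqd : q ≤ d := by omega
    -- extend inner range
    have hext : ∑ k ∈ range ((d - q) + 1), c (k+1) *
              (((d - q).factorial : ℝ) / (k.factorial : ℝ)) * coeff (d - q) (F^k)
        = ∑ k ∈ range (d + 1), c (k+1) *
              (((d - q).factorial : ℝ) / (k.factorial : ℝ)) * coeff (d - q) (F^k) := by
      apply Finset.sum_subset (Finset.range_subset_range.2 (by omega))
      intro k _ hk
      rw [Finset.mem_range, not_lt] at hk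
      rw [coeff_pow_zero_of_lt hF (by omega)]
      ring
    rw [hext, nsmul_eq_mul, Finset.mul_sum, Finset.mul_sum]
    apply Finset.sum_congr rfl
    intro k _
    have hkey : ((d.choose q : ℕ) : ℝ) * (q.factorial : ℝ) * ((d-q).factorial : ℝ)
        = (d.factorial : ℝ) := by
      rw [← Nat.cast_mul, ← Nat.cast_mul, Nat.choose_mul_factorial_mul_factorial hqd]
    have hq1 : ((q+1).factorial : ℝ) = ((q:ℝ)+1) * (q.factorial : ℝ) := by
      rw [Nat.factorial_succ]; push_cast; ring
    have hkf : (k.factorial : ℝ) ≠ 0 := Nat.cast_ne_zero.2 k.factorial_ne_zero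
    rw [hq1, ← hkey]
    ring

end Aux

set_option maxHeartbeats 2000000 in
/-- Lemma 3.3: coefficients in terms of moments and vice versa, via even set partitions. -/
theorem moment_coefficient_formulas (t : ℝ) (ht : t ≠ 0) (m a : ℕ → ℝ)
    (h : fexp (PowerSeries.C t * evenSeries m) = coeffSeries a) :
    ∀ n : ℕ, 1 ≤ n →
      (a n = (1 / ((2 * n).factorial : ℝ)) *
        ∑ π ∈ evenPartitions (2 * n),
          ((2 * t) ^ π.parts.card * ∏ B ∈ π.parts, ((B.card - 1).factorial : ℝ)) *
            ∏ B ∈ π.parts, m (B.card / 2)) ∧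
      (m n = 1 / (2 * ((2 * n - 1).factorial : ℝ) * t) *
        ∑ π ∈ evenPartitions (2 * n),
          ((-1 : ℝ) ^ (π.parts.card - 1) * ((π.parts.card - 1).factorial : ℝ) *
            ∏ B ∈ π.parts, (B.card.factorial : ℝ)) *
            ∏ B ∈ π.parts, a (B.card / 2)) := by
  intro n hn
  set F := PowerSeries.C t * evenSeries m with hFdef
  have hF : constantCoeff F = 0 := by
    rw [hFdef, ← coeff_zero_eq_constantCoeff, coeff_C_mul, evenSeries, coeff_mk]
    simp
  have hcoeffF : ∀ j : ℕ, coeff j F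
      = if j ≠ 0 ∧ j % 2 = 0 then t * (m (j / 2) / ((j / 2 : ℕ) : ℝ)) else 0 := by
    intro j
    rw [hFdef, coeff_C_mul, evenSeries, coeff_mk]
    split_ifs <;> simp
  have hcard : (Finset.univ : Finset (Fin (2 * n))).card = 2 * n := by
    simp
  have hfacne : ((2*n).factorial : ℝ) ≠ 0 := Nat.cast_ne_zero.2 (Nat.factorial_ne_zero _)
  -- the coefficient series A
  have hA1 : constantCoeff (coeffSeries a) = 1 := by
    rw [← coeff_zero_eq_constantCoeff, coeffSeries, coeff_mk]
    simp
  have hE : constantCoeff (coeffSeries a - 1) = 0 := by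
    rw [map_sub, hA1, map_one, sub_self]
  have hcoeffE : ∀ j : ℕ, j ≠ 0 → coeff j (coeffSeries a - 1)
      = if j % 2 = 0 then a (j / 2) else 0 := by
    intro j hj
    rw [map_sub, coeffSeries, coeff_mk, coeff_one, if_neg hj, if_neg hj, sub_zero]
  constructor
  -- Part 1
  · have key := main_comb (α := Fin (2*n)) hF (2*n) univ hcard (fun _ => 1)
    have lhs_eq : (∑ π : Finpartition (univ : Finset (Fin (2*n))), (1:ℝ) *
          ∏ B ∈ π.parts, ((B.card.factorial : ℝ) * coeff B.card F))
        = ∑ π ∈ evenPartitions (2 * n),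
          ((2 * t) ^ π.parts.card * ∏ B ∈ π.parts, ((B.card - 1).factorial : ℝ)) *
            ∏ B ∈ π.parts, m (B.card / 2) := by
      classical
      calc (∑ π : Finpartition (univ : Finset (Fin (2*n))), (1:ℝ) *
          ∏ B ∈ π.parts, ((B.card.factorial : ℝ) * coeff B.card F))
          = ∑ π ∈ evenPartitions (2*n), (1:ℝ) *
          ∏ B ∈ π.parts, ((B.card.factorial : ℝ) * coeff B.card F) := by
            refine (Finset.sum_subset (by intro y _; exact mem_univ y) ?_).symm
            intro π _ hπ
            have : ¬ IsEvenPartition π := by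
              intro hcon
              exact hπ (by simp [evenPartitions, hcon])
            rw [IsEvenPartition] at this
            push_neg at this
            obtain ⟨B, hB, hodd⟩ := this
            rw [one_mul]
            apply Finset.prod_eq_zero hB
            rw [hcoeffF, if_neg (by
              intro hc
              exact hodd (Nat.even_iff.2 hc.2)), mul_zero]
        _ = _ := by
            apply Finset.sum_congr rfl
            intro π hπ
            have heven : IsEvenPartition π := by
              simpa [evenPartitions] using hπ
            rw [one_mul]
            have hblock : ∀ B ∈ π.parts, ((B.card.factorial : ℝ) * coeff B.card F)
                = (2 * t) * ((B.card - 1).factorial : ℝ) * m (B.card / 2) := by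
              intro B hB
              have hne : B.card ≠ 0 := Finset.card_ne_zero.2 (π.nonempty_of_mem_parts hB)
              have hmod : B.card % 2 = 0 := Nat.even_iff.1 (heven B hB)
              rw [hcoeffF, if_pos ⟨hne, hmod⟩]
              have hk0 : B.card / 2 ≠ 0 := by omega
              have hkne : ((B.card / 2 : ℕ) : ℝ) ≠ 0 := Nat.cast_ne_zero.2 hk0
              have hj : ((B.card : ℕ) : ℝ) = 2 * ((B.card / 2 : ℕ) : ℝ) := by
                have h2 : B.card = 2 * (B.card / 2) := by omega
                nth_rewrite 1 [h2]
                push_cast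
                ring
              have hfact : (B.card.factorial : ℝ)
                  = (B.card : ℝ) * ((B.card - 1).factorial : ℝ) := by
                obtain ⟨j', hj'⟩ : ∃ j', B.card = j' + 1 := ⟨B.card - 1, by omega⟩
                rw [hj', Nat.factorial_succ]
                push_cast [Nat.add_sub_cancel]
                ring
              rw [hfact, hj]
              field_simp
            rw [Finset.prod_congr rfl hblock, Finset.prod_mul_distrib,
              Finset.prod_mul_distrib, Finset.prod_const]
            try ring
    have rhs_eq : (∑ k ∈ range (2*n+1), (1:ℝ) * (((2*n).factorial : ℝ) / (k.factorial : ℝ))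
          * coeff (2*n) (F^k)) = ((2*n).factorial : ℝ) * a n := by
      have hcoe : coeff (2*n) (fexp F) = a n := by
        rw [h, coeffSeries, coeff_mk, if_neg (by omega), if_pos (by omega)]
        congr 1
        omega
      rw [← hcoe, coeff_fexp hF (Nat.lt_succ_self _), Finset.mul_sum]
      apply Finset.sum_congr rfl
      intro k _
      ring
    have main : (∑ π ∈ evenPartitions (2 * n),
          ((2 * t) ^ π.parts.card * ∏ B ∈ π.parts, ((B.card - 1).factorial : ℝ)) *
            ∏ B ∈ π.parts, m (B.card / 2)) = ((2*n).factorial : ℝ) * a n := by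
      rw [← lhs_eq, key, rhs_eq]
    rw [main]
    field_simp
  -- Part 2
  · have key := main_comb (α := Fin (2*n)) hE (2*n) univ hcard
      (fun k => (-1:ℝ)^(k-1) * ((k-1).factorial : ℝ))
    have lhs_eq : (∑ π : Finpartition (univ : Finset (Fin (2*n))),
          ((-1:ℝ)^(π.parts.card-1) * ((π.parts.card-1).factorial : ℝ)) *
          ∏ B ∈ π.parts, ((B.card.factorial : ℝ) * coeff B.card (coeffSeries a - 1)))
        = ∑ π ∈ evenPartitions (2 * n),
          ((-1 : ℝ) ^ (π.parts.card - 1) * ((π.parts.card - 1).factorial : ℝ) *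
            ∏ B ∈ π.parts, (B.card.factorial : ℝ)) *
            ∏ B ∈ π.parts, a (B.card / 2) := by
      classical
      calc (∑ π : Finpartition (univ : Finset (Fin (2*n))),
          ((-1:ℝ)^(π.parts.card-1) * ((π.parts.card-1).factorial : ℝ)) *
          ∏ B ∈ π.parts, ((B.card.factorial : ℝ) * coeff B.card (coeffSeries a - 1)))
          = ∑ π ∈ evenPartitions (2*n),
            ((-1:ℝ)^(π.parts.card-1) * ((π.parts.card-1).factorial : ℝ)) *
            ∏ B ∈ π.parts, ((B.card.factorial : ℝ) * coeff B.card (coeffSeries a - 1)) := by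
            refine (Finset.sum_subset (by intro y _; exact mem_univ y) ?_).symm
            intro π _ hπ
            have : ¬ IsEvenPartition π := by
              intro hcon
              exact hπ (by simp [evenPartitions, hcon])
            rw [IsEvenPartition] at this
            push_neg at this
            obtain ⟨B, hB, hodd⟩ := this
            have hne : B.card ≠ 0 := Finset.card_ne_zero.2 (π.nonempty_of_mem_parts hB)
            have h0 : coeff B.card (coeffSeries a - 1) = 0 := by
              rw [hcoeffE _ hne, if_neg (by
                intro hc
                exact hodd (Nat.even_iff.2 hc))]
            rw [Finset.prod_eq_zero hB (by rw [h0, mul_zero]), mul_zero]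
        _ = _ := by
            apply Finset.sum_congr rfl
            intro π hπ
            have heven : IsEvenPartition π := by
              simpa [evenPartitions] using hπ
            have hblock : ∀ B ∈ π.parts, ((B.card.factorial : ℝ) *
                coeff B.card (coeffSeries a - 1))
                = (B.card.factorial : ℝ) * a (B.card / 2) := by
              intro B hB
              have hne : B.card ≠ 0 := Finset.card_ne_zero.2 (π.nonempty_of_mem_parts hB)
              rw [hcoeffE _ hne, if_pos (Nat.even_iff.1 (heven B hB))]
            rw [Finset.prod_congr rfl hblock, Finset.prod_mul_distrib]
            ring
    have rhs_eq : (∑ k ∈ range (2*n+1),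
          ((-1:ℝ)^(k-1) * ((k-1).factorial : ℝ)) * (((2*n).factorial : ℝ) / (k.factorial : ℝ))
          * coeff (2*n) ((coeffSeries a - 1)^k))
        = ((2*n).factorial : ℝ) * (t * (m n / (n : ℝ))) := by
      have hflog : flog (coeffSeries a) = F := by
        rw [← h]
        exact flog_fexp hF
      have hco : coeff (2*n) (flog (coeffSeries a)) = t * (m n / (n : ℝ)) := by
        rw [hflog, hcoeffF, if_pos ⟨(by omega : (2*n : ℕ) ≠ 0), (by omega : (2*n) % 2 = 0)⟩,
          show 2*n/2 = n from by omega]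
      rw [← hco, flog, coeff_mk, Finset.mul_sum]
      apply Finset.sum_congr rfl
      intro k _
      obtain _ | k := k
      · have : coeff (2*n) ((coeffSeries a - 1)^0) = 0 := by
          rw [pow_zero, coeff_one, if_neg (by omega)]
        rw [this]
        simp
      · have hk1 : ((k+1).factorial : ℝ) = ((k:ℝ)+1) * (k.factorial : ℝ) := by
          rw [Nat.factorial_succ]; push_cast; ring
        have hkf : (k.factorial : ℝ) ≠ 0 := Nat.cast_ne_zero.2 k.factorial_ne_zero
        have hk0 : ((k:ℝ)+1) ≠ 0 := by positivity
        rw [Nat.add_sub_cancel, hk1]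
        push_cast
        field_simp
    have main2 : (∑ π ∈ evenPartitions (2 * n),
          ((-1 : ℝ) ^ (π.parts.card - 1) * ((π.parts.card - 1).factorial : ℝ) *
            ∏ B ∈ π.parts, (B.card.factorial : ℝ)) *
            ∏ B ∈ π.parts, a (B.card / 2))
        = ((2*n).factorial : ℝ) * (t * (m n / (n : ℝ))) := by
      rw [← lhs_eq, key, rhs_eq]
    rw [main2]
    have h2n : ((2*n).factorial : ℝ) = ((2*n : ℕ) : ℝ) * ((2*n-1).factorial : ℝ) := by
      rw [show 2*n = (2*n-1)+1 from by omega, Nat.factorial_succ, Nat.add_sub_cancel]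
      push_cast
      ring
    rw [h2n]
    have hnne : ((n:ℝ)) ≠ 0 := Nat.cast_ne_zero.2 (by omega)
    have hfne : ((2*n-1).factorial : ℝ) ≠ 0 := Nat.cast_ne_zero.2 (Nat.factorial_ne_zero _)
    push_cast
    field_simp
end

section
/- Let t, u be real numbers with t + i ≠ 0 and u + i ≠ 0 for every integer i ≥ 0, and let (a_{2n})_{n≥1}, (κ_{2ℓ})_{ℓ≥1}, (m_{2k})_{k≥1} be real sequences satisfying the formal power series identities exp(Σ_{ℓ≥1} (κ_{2ℓ}/ℓ) z^{2ℓ}) = 1 + Σ_{n≥1} (a_{2n}/((t)_n (u)_n)) z^{2n} and exp(t Σ_{k≥1} (m_{2k}/k) z^{2k}) = 1 + Σ_{n≥1} a_{2n} z^{2n} in ℝ[[z]]. Then for every n ≥ 1: κ_{2n} = (1/(2(2n−1)!)) · Σ_{σ ∈ P^even(2n)} [ (2t)^{#(σ)} (Π_{V∈σ} (|V|−1)!) · ( Σ_{π ∈ P^even(2n): π ≥ σ} (−1)^{#(π)−1} (#(π)−1)! / Π_{B∈π} (t)_{|B|/2} (u)_{|B|/2} ) ] · m_σ, where π ≥ σ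 means that σ is a refinement of π (every block of σ is contained in some block of π). -/
open Finset

/-- `σ` is a refinement of `π` (i.e. `π ≥ σ`): every block of `σ` is contained in a block of `π`. -/
def IsRefinement {n : ℕ} (π σ : Finpartition (Finset.univ : Finset (Fin n))) : Prop :=
  ∀ V ∈ σ.parts, ∃ B ∈ π.parts, V ⊆ B

/-- Pochhammer symbol `(v)_n = v (v+1) ⋯ (v+n-1)`. -/
noncomputable def pochEval (v : ℝ) (n : ℕ) : ℝ := (ascPochhammer ℝ n).eval v

/-- The series `1 + Σ_{n≥1} (a_{2n}/((t)_n (u)_n)) z^{2n}` (where `a n` stands for `a_{2n}`). -/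
noncomputable def coeffSeriesTU (t u : ℝ) (a : ℕ → ℝ) : PowerSeries ℝ :=
  PowerSeries.mk fun j =>
    if j = 0 then 1
    else if j % 2 = 0 then a (j / 2) / (pochEval t (j / 2) * pochEval u (j / 2)) else 0

open Finset PowerSeries

noncomputable def pc (g : ℕ → ℝ) (F : PowerSeries ℝ) (n : ℕ) : ℝ :=
  ∑ k ∈ Finset.range (n + 1), g k * PowerSeries.coeff n (F ^ k)

lemma coeff_pow_eq_zero' {F : PowerSeries ℝ} (hF : PowerSeries.constantCoeff F = 0) :
    ∀ {k n : ℕ}, n < k → PowerSeries.coeff n (F ^ k) = 0 := by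
  intro k
  induction k with
  | zero => intro n h; exact absurd h (Nat.not_lt_zero n)
  | succ k ih =>
    intro n h
    rw [pow_succ, PowerSeries.coeff_mul]
    apply Finset.sum_eq_zero
    rintro ⟨i, j⟩ hij
    rw [Finset.HasAntidiagonal.mem_antidiagonal] at hij
    rcases Nat.eq_zero_or_pos j with hj | hj
    · subst hj
      have h0 : PowerSeries.coeff 0 F = 0 := by
        rw [PowerSeries.coeff_zero_eq_constantCoeff]; exact hF
      simp [h0]
    · have hi : i < k := by omega
      rw [ih hi, zero_mul]

lemma pc_stable (g : ℕ → ℝ) {F : PowerSeries ℝ} (hF : PowerSeries.constantCoeff F = 0)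
    {n N : ℕ} (h : n ≤ N) :
    pc g F n = ∑ k ∈ Finset.range (N + 1), g k * PowerSeries.coeff n (F ^ k) := by
  rw [pc]
  apply Finset.sum_subset
  · intro x hx; simp at hx ⊢; omega
  · intro x hx hx'
    simp only [Finset.mem_range] at hx hx'
    rw [coeff_pow_eq_zero' hF (by omega), mul_zero]

lemma pc_deriv (g : ℕ → ℝ) {F : PowerSeries ℝ} (hF : PowerSeries.constantCoeff F = 0)
    (n : ℕ) :
    (n + 1 : ℝ) * pc g F (n + 1) =
      ∑ j ∈ Finset.range (n + 1),
        ((j + 1 : ℝ) * PowerSeries.coeff (j + 1) F) *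
          pc (fun k => (k + 1 : ℝ) * g (k + 1)) F (n - j) := by
  have key : ∀ k : ℕ, (n + 1 : ℝ) * PowerSeries.coeff (n + 1) (F ^ (k + 1)) =
      (k + 1 : ℝ) * ∑ j ∈ Finset.range (n + 1),
        ((j + 1 : ℝ) * PowerSeries.coeff (j + 1) F) * PowerSeries.coeff (n - j) (F ^ k) := by
    intro k
    have hD : PowerSeries.coeff n (PowerSeries.derivative ℝ (F ^ (k + 1)))
        = PowerSeries.coeff (n + 1) (F ^ (k + 1)) * (n + 1 : ℝ) :=
      PowerSeries.coeff_derivative _ n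
    have hDpow : (PowerSeries.derivative ℝ) (F ^ (k + 1))
        = (k + 1) • ((PowerSeries.derivative ℝ) F * F ^ k) := by
      have := Derivation.leibniz_pow (PowerSeries.derivative ℝ) F (k + 1)
      simpa [mul_comm] using this
    rw [hDpow, map_nsmul, nsmul_eq_mul] at hD
    push_cast at hD
    rw [mul_comm ((n : ℝ) + 1), ← hD]
    congr 1
    rw [PowerSeries.coeff_mul, Finset.Nat.sum_antidiagonal_eq_sum_range_succ_mk]
    apply Finset.sum_congr rfl
    intro j hj
    rw [PowerSeries.coeff_derivative]
    ring
  rw [pc, Finset.mul_sum, Finset.sum_range_succ']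
  simp only [pow_zero, PowerSeries.coeff_one]
  rw [if_neg (by omega)]
  rw [mul_zero, mul_zero, add_zero]
  have step : ∀ k ∈ Finset.range (n + 1),
      (n + 1 : ℝ) * (g (k + 1) * PowerSeries.coeff (n + 1) (F ^ (k + 1)))
      = ∑ j ∈ Finset.range (n + 1), ((j + 1 : ℝ) * PowerSeries.coeff (j + 1) F) *
          (((k : ℝ) + 1) * g (k + 1) * PowerSeries.coeff (n - j) (F ^ k)) := by
    intro k _
    rw [mul_left_comm, key k, Finset.mul_sum, Finset.mul_sum]
    apply Finset.sum_congr rfl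
    intro j _
    ring
  rw [Finset.sum_congr rfl step, Finset.sum_comm]
  apply Finset.sum_congr rfl
  intro j hj
  rw [pc_stable _ hF (Nat.sub_le n j), Finset.mul_sum]

open Finset

variable {α : Type*} [DecidableEq α]

/-- weighted partition sum -/
noncomputable def PW (v f : ℕ → ℝ) (s : Finset α) : ℝ :=
  ∑ π : Finpartition s, v π.parts.card * ∏ B ∈ π.parts, (f B.card)

namespace Finpartition

noncomputable def partOf {s : Finset α} (π : Finpartition s) (a : α) : Finset α :=
  if h : a ∈ s then (π.exists_mem h).choose else ∅

lemma partOf_mem {s : Finset α} (π : Finpartition s) {a : α} (ha : a ∈ s) :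
    π.partOf a ∈ π.parts := by
  rw [partOf, dif_pos ha]
  exact (π.exists_mem ha).choose_spec.1

lemma mem_partOf {s : Finset α} (π : Finpartition s) {a : α} (ha : a ∈ s) :
    a ∈ π.partOf a := by
  rw [partOf, dif_pos ha]
  exact (π.exists_mem ha).choose_spec.2

lemma partOf_eq {s : Finset α} (π : Finpartition s) {a : α} (ha : a ∈ s) {B : Finset α}
    (hB : B ∈ π.parts) (haB : a ∈ B) : π.partOf a = B :=
  π.eq_of_mem_parts (π.partOf_mem ha) hB (π.mem_partOf ha) haB

lemma avoid_parts_eq {s : Finset α} (π : Finpartition s) {B : Finset α} (hB : B ∈ π.parts) :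
    (π.avoid B).parts = π.parts.erase B := by
  ext C
  rw [mem_avoid, Finset.mem_erase]
  constructor
  · rintro ⟨d, hd, hdB, rfl⟩
    have hne : d ≠ B := fun h => hdB (h ▸ le_refl _)
    have hdisj : Disjoint d B := π.disjoint hd hB hne
    rw [Finset.sdiff_eq_self_iff_disjoint.2 hdisj]
    exact ⟨fun h => hdB (h ▸ le_refl _) |>.elim, hd⟩
  · rintro ⟨hne, hC⟩
    have hdisj : Disjoint C B := π.disjoint hC hB hne
    refine ⟨C, hC, ?_, Finset.sdiff_eq_self_iff_disjoint.2 hdisj⟩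
    intro hle
    exact π.bot_notMem (by
      have : C = ⊥ := disjoint_self.mp (hdisj.mono_right hle)
      rwa [this] at hC)

end Finpartition

lemma PW_empty (v f : ℕ → ℝ) (s : Finset α) (hs : s = ∅) : PW v f s = v 0 := by
  subst hs
  rw [PW]
  have hu : ∀ π : Finpartition (∅ : Finset α), π.parts = ∅ := by
    intro π
    exact Finpartition.parts_eq_empty_iff.2 rfl
  rw [Finset.sum_congr (g := fun _ => v 0 * 1) rfl (fun π _ => by rw [hu π]; simp)]
  rw [Finset.sum_const]
  have : Fintype.card (Finpartition (∅ : Finset α)) = 1 := by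
    have : Subsingleton (Finpartition (∅ : Finset α)) := by
      constructor
      intro P Q
      ext B
      rw [hu P, hu Q]
    have hne : Nonempty (Finpartition (∅ : Finset α)) :=
      ⟨(Finpartition.empty (Finset α)).copy rfl⟩
    exact Fintype.card_eq_one_iff.2 ⟨Classical.choice hne, fun y => Subsingleton.elim y _⟩
  simp [Finset.card_univ, this]

lemma PW_recursion (v f : ℕ → ℝ) (s : Finset α) {a : α} (ha : a ∈ s) :
    PW v f s = ∑ B ∈ (s.erase a).powerset,
      f (B.card + 1) * PW (fun k => v (k + 1)) f ((s.erase a) \ B) := by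
  classical
  rw [PW]
  rw [← Finset.sum_fiberwise_of_maps_to (g := fun π : Finpartition s => (π.partOf a).erase a)
      (t := (s.erase a).powerset) (fun π _ => by
        rw [Finset.mem_powerset]
        exact Finset.erase_subset_erase a (π.le (π.partOf_mem ha)))]
  apply Finset.sum_congr rfl
  intro B hB
  rw [Finset.mem_powerset] at hB
  have haB : a ∉ B := fun h => (Finset.mem_erase.1 (hB h)).1 rfl
  -- the union identity
  have hc : ((s.erase a) \ B) ⊔ insert a B = s := by
    ext x
    simp only [Finset.sup_eq_union, Finset.mem_union, Finset.mem_sdiff, Finset.mem_erase,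
      Finset.mem_insert]
    constructor
    · rintro (⟨⟨-, hx⟩, -⟩ | (rfl | hx))
      · exact hx
      · exact ha
      · exact (Finset.mem_erase.1 (hB hx)).2
    · intro hx
      by_cases hxa : x = a
      · right; left; exact hxa
      · by_cases hxB : x ∈ B
        · right; right; exact hxB
        · left; exact ⟨⟨hxa, hx⟩, hxB⟩
  have hdisj : Disjoint ((s.erase a) \ B) (insert a B) := by
    rw [Finset.disjoint_right]
    intro x hx
    simp only [Finset.mem_insert] at hx
    simp only [Finset.mem_sdiff, Finset.mem_erase, not_and, and_imp]
    rcases hx with rfl | hx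
    · intro h; exact absurd rfl h
    · intro _ _; exact fun h => h hx
  have hbne : (insert a B : Finset α) ≠ ⊥ := by
    rw [Finset.bot_eq_empty]
    exact Finset.insert_ne_empty a B
  rw [PW, Finset.mul_sum]
  refine Finset.sum_bij' (i := fun π hπ => (π.avoid (π.partOf a)).copy ?_)
    (j := fun ρ _ => ρ.extend hbne hdisj hc) ?_ ?_ ?_ ?_ ?_
  case _ =>
    rw [Finset.mem_filter] at hπ
    have hPa : π.partOf a = insert a B := by
      rw [← hπ.2, Finset.insert_erase (π.mem_partOf ha)]
    rw [hPa]
    ext x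
    simp only [Finset.mem_sdiff, Finset.mem_erase, Finset.mem_insert]
    constructor
    · rintro ⟨hxs, hx⟩
      push_neg at hx
      exact ⟨⟨hx.1, hxs⟩, hx.2⟩
    · rintro ⟨⟨hxa, hxs⟩, hxB⟩
      exact ⟨hxs, by push_neg; exact ⟨hxa, hxB⟩⟩
  case _ =>
    intro π hπ
    exact Finset.mem_univ _
  case _ =>
    intro ρ hρ
    rw [Finset.mem_filter]
    refine ⟨Finset.mem_univ _, ?_⟩
    have hmem : insert a B ∈ (ρ.extend hbne hdisj hc).parts := by
      rw [Finpartition.extend_parts]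
      exact Finset.mem_insert_self _ _
    rw [Finpartition.partOf_eq _ ha hmem (Finset.mem_insert_self a B)]
    exact Finset.erase_insert haB
  case _ =>
    intro π hπ
    rw [Finset.mem_filter] at hπ
    have hPa : π.partOf a = insert a B := by
      rw [← hπ.2, Finset.insert_erase (π.mem_partOf ha)]
    apply Finpartition.ext
    rw [Finpartition.extend_parts, Finpartition.copy_parts,
      Finpartition.avoid_parts_eq π (hPa ▸ π.partOf_mem ha), ← hPa,
      Finset.insert_erase (π.partOf_mem ha)]
  case _ =>
    intro ρ hρ
    have hmem : insert a B ∈ (ρ.extend hbne hdisj hc).parts := by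
      rw [Finpartition.extend_parts]
      exact Finset.mem_insert_self _ _
    have hPa : (ρ.extend hbne hdisj hc).partOf a = insert a B :=
      Finpartition.partOf_eq _ ha hmem (Finset.mem_insert_self a B)
    apply Finpartition.ext
    rw [Finpartition.copy_parts, Finpartition.avoid_parts_eq _ (hPa.symm ▸ hmem), hPa,
      Finpartition.extend_parts, Finset.erase_insert]
    intro hcon
    have := ρ.le hcon
    have : a ∈ (s.erase a) \ B := this (Finset.mem_insert_self a B)
    simp at this
  case _ =>
    intro π hπ
    rw [Finset.mem_filter] at hπ
    have hPa : π.partOf a = insert a B := by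
      rw [← hπ.2, Finset.insert_erase (π.mem_partOf ha)]
    have hmem := π.partOf_mem ha
    have hcard : (π.partOf a).card = B.card + 1 := by
      rw [hPa, Finset.card_insert_of_notMem haB]
    rw [Finpartition.copy_parts, Finpartition.avoid_parts_eq π hmem,
      Finset.card_erase_of_mem hmem]
    rw [← Finset.mul_prod_erase _ _ hmem, hcard]
    have hge : 1 ≤ π.parts.card := Finset.card_pos.2 ⟨_, hmem⟩
    have : π.parts.card - 1 + 1 = π.parts.card := by omega
    rw [this]
    ring

lemma master {α : Type*} [DecidableEq α] {F : PowerSeries ℝ}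
    (hF : PowerSeries.constantCoeff F = 0) :
    ∀ (n : ℕ) (g : ℕ → ℝ) (s : Finset α), s.card = n →
      ((n.factorial : ℝ)) * pc g F n =
        PW (fun k => (k.factorial : ℝ) * g k) (fun d => (d.factorial : ℝ) * PowerSeries.coeff d F) s := by
  intro n
  induction n using Nat.strong_induction_on with
  | _ n ih =>
    intro g s hs
    match n, hs with
    | 0, hs =>
      rw [Finset.card_eq_zero] at hs
      rw [PW_empty _ _ _ hs, pc]
      simp
    | (m+1), hs =>
      have hpos : 0 < s.card := by omega
      obtain ⟨a, ha⟩ := Finset.card_pos.1 hpos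
      have hcardE : (s.erase a).card = m := by
        rw [Finset.card_erase_of_mem ha, hs]; omega
      have hinner : ∀ B ∈ (s.erase a).powerset,
          (fun d => (d.factorial : ℝ) * PowerSeries.coeff d F) (B.card + 1) *
            PW (fun k => (fun k => (k.factorial : ℝ) * g k) (k+1))
              (fun d => (d.factorial : ℝ) * PowerSeries.coeff d F) ((s.erase a) \ B)
          = (((B.card+1).factorial : ℝ) * PowerSeries.coeff (B.card+1) F) *
            (((m - B.card).factorial : ℝ) * pc (fun k => ((k:ℝ)+1) * g (k+1)) F (m - B.card)) := by
        intro B hB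
        rw [Finset.mem_powerset] at hB
        have hcard : ((s.erase a) \ B).card = m - B.card := by
          rw [Finset.card_sdiff_of_subset hB, hcardE]
        have hlt : m - B.card < m + 1 := by omega
        have hv : (fun k : ℕ => (fun k : ℕ => (k.factorial : ℝ) * g k) (k+1))
            = (fun k : ℕ => (k.factorial : ℝ) * (((k:ℝ)+1) * g (k+1))) := by
          funext k
          show (((k+1).factorial : ℝ)) * g (k+1) = _
          rw [Nat.factorial_succ]; push_cast; ring
        rw [hv, ← ih _ hlt (fun k => ((k:ℝ)+1) * g (k+1)) _ hcard]
      have key : PW (fun k => ((k.factorial : ℝ)) * g k)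
          (fun d => (d.factorial : ℝ) * PowerSeries.coeff d F) s
          = ∑ B ∈ (s.erase a).powerset,
            (((B.card+1).factorial : ℝ) * PowerSeries.coeff (B.card+1) F) *
            (((m - B.card).factorial : ℝ) * pc (fun k => ((k:ℝ)+1) * g (k+1)) F (m - B.card)) := by
        rw [PW_recursion _ _ _ ha]
        exact Finset.sum_congr rfl hinner
      rw [key]
      rw [Finset.sum_powerset, hcardE]
      have hgrp : ∀ j ∈ Finset.range (m+1),
          ∑ B ∈ (s.erase a).powersetCard j,
            (((B.card+1).factorial : ℝ) * PowerSeries.coeff (B.card+1) F) *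
            (((m - B.card).factorial : ℝ) * pc (fun k => ((k:ℝ)+1) * g (k+1)) F (m - B.card))
          = (m.choose j : ℝ) * ((((j+1).factorial : ℝ) * PowerSeries.coeff (j+1) F) *
            (((m - j).factorial : ℝ) * pc (fun k => ((k:ℝ)+1) * g (k+1)) F (m - j))) := by
        intro j hj
        rw [Finset.sum_congr rfl (fun B hB => by
          rw [(Finset.mem_powersetCard.1 hB).2])]
        rw [Finset.sum_const, ← hcardE, Finset.card_powersetCard, hcardE, nsmul_eq_mul]
      rw [Finset.sum_congr rfl hgrp]
      have hfact : ((m+1).factorial : ℝ) = ((m:ℝ)+1) * (m.factorial : ℝ) := by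
        rw [Nat.factorial_succ]; push_cast; ring
      rw [hfact]
      have hlhs : ((m:ℝ)+1) * (m.factorial:ℝ) * pc g F (m+1)
          = (m.factorial:ℝ) * (((m:ℝ)+1) * pc g F (m+1)) := by ring
      rw [hlhs, pc_deriv g hF m, Finset.mul_sum]
      apply Finset.sum_congr rfl
      intro j hj
      rw [Finset.mem_range] at hj
      have hjm : j ≤ m := by omega
      have hch := Nat.choose_mul_factorial_mul_factorial hjm
      have hch' : (m.choose j : ℝ) * (j.factorial : ℝ) * ((m-j).factorial : ℝ) = (m.factorial : ℝ) := by
        exact_mod_cast congrArg (Nat.cast : ℕ → ℝ) hch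
      have hfj : ((j+1).factorial : ℝ) = ((j:ℝ)+1) * (j.factorial : ℝ) := by
        rw [Nat.factorial_succ]; push_cast; ring
      rw [hfj, ← hch']
      ring

open Finset

variable {α : Type*} [DecidableEq α] {s : Finset α}

namespace Finpartition

lemma exists_subset_part {ρ π : Finpartition s} (h : ρ ≤ π) {B : Finset α} (hB : B ∈ ρ.parts) :
    ∃ C ∈ π.parts, B ⊆ C := h hB

/-- glue a partition of the set of blocks into a coarsening -/
def glue (ρ : Finpartition s) (τ : Finpartition ρ.parts) : Finpartition s where
  parts := τ.parts.image (fun T => T.sup id)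
  supIndep := by
    rw [Finset.supIndep_iff_pairwiseDisjoint]
    intro c1 hc1 c2 hc2 hne
    simp only [Finset.coe_image, Set.mem_image, Finset.mem_coe] at hc1 hc2
    obtain ⟨T1, hT1, rfl⟩ := hc1
    obtain ⟨T2, hT2, rfl⟩ := hc2
    have hTne : T1 ≠ T2 := fun h => hne (by rw [h])
    show Disjoint (T1.sup id) (T2.sup id)
    rw [Finset.disjoint_left]
    intro x hx1 hx2
    rw [Finset.mem_sup] at hx1 hx2
    obtain ⟨B1, hB1, hxB1⟩ := hx1
    obtain ⟨B2, hB2, hxB2⟩ := hx2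
    have hB1p : B1 ∈ ρ.parts := τ.le hT1 hB1
    have hB2p : B2 ∈ ρ.parts := τ.le hT2 hB2
    have : B1 = B2 := ρ.eq_of_mem_parts hB1p hB2p hxB1 hxB2
    subst this
    have hdisj : Disjoint T1 T2 := τ.disjoint hT1 hT2 hTne
    exact Finset.disjoint_left.1 hdisj hB1 hB2
  sup_parts := by
    apply le_antisymm
    · rw [Finset.sup_le_iff]
      intro C hC
      simp only [Finset.mem_image] at hC
      obtain ⟨T, hT, rfl⟩ := hC
      simp only [id]
      rw [Finset.sup_le_iff]
      intro B hB
      exact ρ.le (τ.le hT hB)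
    · intro x hx
      obtain ⟨B, hB, hxB⟩ := ρ.exists_mem hx
      have hBT : B ∈ τ.parts.sup id := by rw [τ.sup_parts]; exact hB
      rw [Finset.mem_sup] at hBT
      obtain ⟨T, hT, hBT⟩ := hBT
      have : B ⊆ T.sup id := Finset.le_sup (f := id) hBT
      rw [Finset.mem_sup]
      exact ⟨T.sup id, Finset.mem_image_of_mem _ hT, by simp only [id]; exact this hxB⟩
  bot_notMem := by
    intro h
    simp only [Finset.bot_eq_empty, Finset.mem_image] at h
    obtain ⟨T, hT, hsup⟩ := h
    obtain ⟨B, hB⟩ := Finpartition.nonempty_of_mem_parts τ hT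
    have hBp : B ∈ ρ.parts := τ.le hT hB
    obtain ⟨x, hx⟩ := Finpartition.nonempty_of_mem_parts ρ hBp
    have : x ∈ T.sup id := Finset.le_sup (f := id) hB hx
    rw [hsup] at this
    exact absurd this (Finset.notMem_empty x)

lemma glue_sup_injOn (ρ : Finpartition s) (τ : Finpartition ρ.parts) :
    Set.InjOn (fun T : Finset (Finset α) => T.sup id) (τ.parts : Set (Finset (Finset α))) := by
  intro T1 hT1 T2 hT2 heq
  by_contra hne
  obtain ⟨B, hB⟩ := Finpartition.nonempty_of_mem_parts τ hT1
  obtain ⟨x, hx⟩ := Finpartition.nonempty_of_mem_parts ρ (τ.le hT1 hB)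
  have hx1 : x ∈ T1.sup id := Finset.le_sup (f := id) hB hx
  have heq' : T1.sup id = T2.sup id := heq
  have hx2 : x ∈ T2.sup id := by rw [← heq']; exact hx1
  rw [Finset.mem_sup] at hx2
  obtain ⟨B2, hB2, hxB2⟩ := hx2
  have : B = B2 := ρ.eq_of_mem_parts (τ.le hT1 hB) (τ.le hT2 hB2) hx hxB2
  subst this
  exact Finset.disjoint_left.1 (τ.disjoint hT1 hT2 hne) hB hB2

lemma glue_parts_card (ρ : Finpartition s) (τ : Finpartition ρ.parts) :
    (ρ.glue τ).parts.card = τ.parts.card :=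
  Finset.card_image_of_injOn (glue_sup_injOn ρ τ)

lemma le_glue (ρ : Finpartition s) (τ : Finpartition ρ.parts) : ρ ≤ ρ.glue τ := by
  intro B hB
  have hBT : B ∈ τ.parts.sup id := by rw [τ.sup_parts]; exact hB
  rw [Finset.mem_sup] at hBT
  obtain ⟨T, hT, hBT⟩ := hBT
  exact ⟨T.sup id, Finset.mem_image_of_mem _ hT, Finset.le_sup (f := id) hBT⟩

/-- split a coarsening into a partition of the set of blocks -/
def split (ρ π : Finpartition s) (h : ρ ≤ π) : Finpartition ρ.parts where
  parts := π.parts.image (fun C => ρ.parts.filter (· ⊆ C))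
  supIndep := by
    rw [Finset.supIndep_iff_pairwiseDisjoint]
    intro t1 ht1 t2 ht2 hne
    simp only [Finset.coe_image, Set.mem_image, Finset.mem_coe] at ht1 ht2
    obtain ⟨C1, hC1, rfl⟩ := ht1
    obtain ⟨C2, hC2, rfl⟩ := ht2
    have hCne : C1 ≠ C2 := fun hh => hne (by rw [hh])
    show Disjoint (ρ.parts.filter (· ⊆ C1)) (ρ.parts.filter (· ⊆ C2))
    rw [Finset.disjoint_left]
    intro B hB1 hB2
    simp only [id, Finset.mem_filter] at hB1 hB2
    obtain ⟨x, hx⟩ := Finpartition.nonempty_of_mem_parts ρ hB1.1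
    exact hCne (π.eq_of_mem_parts hC1 hC2 (hB1.2 hx) (hB2.2 hx))
  sup_parts := by
    apply le_antisymm
    · rw [Finset.sup_le_iff]
      intro t ht
      simp only [Finset.mem_image] at ht
      obtain ⟨C, hC, rfl⟩ := ht
      simp only [id]
      exact Finset.filter_subset _ _
    · intro B hB
      obtain ⟨C, hC, hBC⟩ := h hB
      rw [Finset.mem_sup]
      exact ⟨ρ.parts.filter (· ⊆ C), Finset.mem_image_of_mem _ hC,
        by simp only [id, Finset.mem_filter]; exact ⟨hB, hBC⟩⟩
  bot_notMem := by
    intro hmem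
    simp only [Finset.bot_eq_empty, Finset.mem_image] at hmem
    obtain ⟨C, hC, hfil⟩ := hmem
    obtain ⟨x, hx⟩ := Finpartition.nonempty_of_mem_parts π hC
    obtain ⟨B, hB, hxB⟩ := ρ.exists_mem (π.le hC hx)
    obtain ⟨C', hC', hBC'⟩ := h hB
    have : C' = C := π.eq_of_mem_parts hC' hC (hBC' hxB) hx
    subst this
    have : B ∈ ρ.parts.filter (· ⊆ C') := by
      rw [Finset.mem_filter]; exact ⟨hB, hBC'⟩
    rw [hfil] at this
    exact absurd this (Finset.notMem_empty B)

lemma split_filter_injOn (ρ π : Finpartition s) (h : ρ ≤ π) :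
    Set.InjOn (fun C => ρ.parts.filter (· ⊆ C)) (π.parts : Set (Finset α)) := by
  intro C1 hC1 C2 hC2 heq
  obtain ⟨x, hx⟩ := Finpartition.nonempty_of_mem_parts π hC1
  obtain ⟨B, hB, hxB⟩ := ρ.exists_mem (π.le hC1 hx)
  obtain ⟨C', hC', hBC'⟩ := h hB
  have hC'C1 : C' = C1 := π.eq_of_mem_parts hC' hC1 (hBC' hxB) hx
  subst hC'C1
  have hBf : B ∈ ρ.parts.filter (· ⊆ C') := by rw [Finset.mem_filter]; exact ⟨hB, hBC'⟩
  have heq' : ρ.parts.filter (· ⊆ C') = ρ.parts.filter (· ⊆ C2) := heq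
  have hBf2 : B ∈ ρ.parts.filter (· ⊆ C2) := heq' ▸ hBf
  rw [Finset.mem_filter] at hBf2
  exact π.eq_of_mem_parts hC1 hC2 (hBC' hxB) (hBf2.2 hxB)

lemma split_parts_card (ρ π : Finpartition s) (h : ρ ≤ π) :
    (ρ.split π h).parts.card = π.parts.card :=
  Finset.card_image_of_injOn (split_filter_injOn ρ π h)

lemma filter_sup_eq (ρ π : Finpartition s) (h : ρ ≤ π) {C : Finset α} (hC : C ∈ π.parts) :
    (ρ.parts.filter (· ⊆ C)).sup id = C := by
  apply le_antisymm
  · rw [Finset.sup_le_iff]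
    intro B hB
    exact (Finset.mem_filter.1 hB).2
  · intro x hx
    obtain ⟨B, hB, hxB⟩ := ρ.exists_mem (π.le hC hx)
    obtain ⟨C', hC', hBC'⟩ := h hB
    have : C' = C := π.eq_of_mem_parts hC' hC (hBC' hxB) hx
    subst this
    rw [Finset.mem_sup]
    exact ⟨B, by rw [Finset.mem_filter]; exact ⟨hB, hBC'⟩, hxB⟩

lemma sup_filter_eq (ρ : Finpartition s) (τ : Finpartition ρ.parts) {T : Finset (Finset α)}
    (hT : T ∈ τ.parts) : ρ.parts.filter (· ⊆ T.sup id) = T := by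
  ext B
  rw [Finset.mem_filter]
  constructor
  · rintro ⟨hB, hBsup⟩
    obtain ⟨x, hx⟩ := Finpartition.nonempty_of_mem_parts ρ hB
    have := hBsup hx
    rw [Finset.mem_sup] at this
    obtain ⟨B', hB', hxB'⟩ := this
    have : B = B' := ρ.eq_of_mem_parts hB (τ.le hT hB') hx hxB'
    subst this
    exact hB'
  · intro hB
    exact ⟨τ.le hT hB, Finset.le_sup (f := id) hB⟩

lemma glue_split (ρ π : Finpartition s) (h : ρ ≤ π) : ρ.glue (ρ.split π h) = π := by
  apply Finpartition.ext
  show ((π.parts.image (fun C => ρ.parts.filter (· ⊆ C))).image (fun T => T.sup id)) = π.parts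
  rw [Finset.image_image]
  ext C
  simp only [Finset.mem_image, Function.comp_apply]
  constructor
  · rintro ⟨D, hD, rfl⟩
    rw [filter_sup_eq ρ π h hD]
    exact hD
  · intro hC
    exact ⟨C, hC, filter_sup_eq ρ π h hC⟩

lemma split_glue (ρ : Finpartition s) (τ : Finpartition ρ.parts) :
    ρ.split (ρ.glue τ) (ρ.le_glue τ) = τ := by
  apply Finpartition.ext
  show ((τ.parts.image (fun T => T.sup id)).image (fun C => ρ.parts.filter (· ⊆ C))) = τ.parts
  rw [Finset.image_image]
  ext T
  simp only [Finset.mem_image, Function.comp_apply]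
  constructor
  · rintro ⟨D, hD, rfl⟩
    rw [sup_filter_eq ρ τ hD]
    exact hD
  · intro hT
    exact ⟨T, hT, sup_filter_eq ρ τ hT⟩

end Finpartition

open Classical in
lemma coarsen_sum (ρ : Finpartition s) (v : ℕ → ℝ) :
    ∑ π : Finpartition s, (if ρ ≤ π then 1 else 0) * v π.parts.card
    = ∑ τ : Finpartition ρ.parts, v τ.parts.card := by
  classical
  simp only [ite_mul, one_mul, zero_mul]
  rw [← Finset.sum_filter]
  refine Finset.sum_bij' (i := fun π hπ => ρ.split π (Finset.mem_filter.1 hπ).2)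
    (j := fun τ _ => ρ.glue τ) ?_ ?_ ?_ ?_ ?_
  · intro π hπ; exact Finset.mem_univ _
  · intro τ _
    rw [Finset.mem_filter]
    exact ⟨Finset.mem_univ _, ρ.le_glue τ⟩
  · intro π hπ
    exact Finpartition.glue_split ρ π _
  · intro τ _
    exact Finpartition.split_glue ρ τ
  · intro π hπ
    rw [Finpartition.split_parts_card]

open Finset

variable {α : Type*} [DecidableEq α] {s : Finset α}

-- filter-sup lemma (same as part4's filter_sup_eq, reproved here standalone for testing)
lemma filter_sup_eq' (ρ π : Finpartition s) (h : ρ ≤ π) {C : Finset α} (hC : C ∈ π.parts) :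
    (ρ.parts.filter (· ⊆ C)).sup id = C := by
  apply le_antisymm
  · rw [Finset.sup_le_iff]; intro B hB; exact (Finset.mem_filter.1 hB).2
  · intro x hx
    obtain ⟨B, hB, hxB⟩ := ρ.exists_mem (π.le hC hx)
    obtain ⟨C', hC', hBC'⟩ := h hB
    have : C' = C := π.eq_of_mem_parts hC' hC (hBC' hxB) hx
    subst this
    rw [Finset.mem_sup]
    exact ⟨B, by rw [Finset.mem_filter]; exact ⟨hB, hBC'⟩, hxB⟩

open Classical in
lemma bind_expansion (f : Finset α → ℝ) (σ : Finpartition s) :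
    ∏ V ∈ σ.parts, (∑ ρ : Finpartition V, ∏ B ∈ ρ.parts, f B)
    = ∑ π : Finpartition s, (if π ≤ σ then 1 else 0) * ∏ B ∈ π.parts, f B := by
  classical
  simp only [ite_mul, one_mul, zero_mul]
  rw [← Finset.sum_filter]
  rw [Finset.prod_sum]
  refine Finset.sum_bij' (i := fun p hp => σ.bind (fun V hV => p V hV))
    (j := fun π hπ => fun V hV => Finpartition.ofSubset π
      (Finset.filter_subset (· ⊆ V) π.parts) (filter_sup_eq' π σ (Finset.mem_filter.1 hπ).2 hV))
    ?_ ?_ ?_ ?_ ?_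
  · intro p hp
    rw [Finset.mem_filter]
    refine ⟨Finset.mem_univ _, ?_⟩
    intro b hb
    rw [Finpartition.mem_bind] at hb
    obtain ⟨V, hV, hbV⟩ := hb
    exact ⟨V, hV, (p V hV).le hbV⟩
  · intro π hπ
    rw [Finset.mem_pi]
    intro V hV
    exact Finset.mem_univ _
  · -- left inverse : j (i p) = p
    intro p hp
    funext V hV
    apply Finpartition.ext
    show (σ.bind (fun V hV => p V hV)).parts.filter (· ⊆ V) = (p V hV).parts
    ext B
    rw [Finset.mem_filter, Finpartition.mem_bind]
    constructor
    · rintro ⟨⟨W, hW, hBW⟩, hBV⟩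
      obtain ⟨x, hx⟩ := Finpartition.nonempty_of_mem_parts _ hBW
      have hBsubW : B ⊆ W := (p W hW).le hBW
      have : W = V := σ.eq_of_mem_parts hW hV (hBsubW hx) (hBV hx)
      subst this
      exact hBW
    · intro hB
      exact ⟨⟨V, hV, hB⟩, (p V hV).le hB⟩
  · -- right inverse : i (j π) = π
    intro π hπ
    rw [Finset.mem_filter] at hπ
    apply Finpartition.ext
    ext B
    rw [Finpartition.mem_bind]
    constructor
    · rintro ⟨V, hV, hB⟩
      exact (Finset.mem_filter.1 hB).1
    · intro hB
      obtain ⟨V, hV, hBV⟩ := hπ.2 hB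
      exact ⟨V, hV, Finset.mem_filter.2 ⟨hB, hBV⟩⟩
  · -- summands
    intro p hp
    show ∏ x ∈ σ.parts.attach, ∏ B ∈ (p x.1 x.2).parts, f B = _
    have hdisj : ∀ x ∈ σ.parts.attach, ∀ y ∈ σ.parts.attach, x ≠ y →
        Disjoint ((p x.1 x.2).parts) ((p y.1 y.2).parts) := by
      rintro ⟨x, hx⟩ - ⟨y, hy⟩ - hxy
      rw [Finset.disjoint_left]
      intro d hdx hdy
      have hne : x ≠ y := fun h => hxy (Subtype.ext h)
      have h1 : d ⊆ x := (p x hx).le hdx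
      have h2 : d ⊆ y := (p y hy).le hdy
      obtain ⟨z, hz⟩ := Finpartition.nonempty_of_mem_parts _ hdx
      exact hne (σ.eq_of_mem_parts hx hy (h1 hz) (h2 hz))
    rw [show (σ.bind (fun V hV => p V hV)).parts
        = σ.parts.attach.biUnion (fun x => (p x.1 x.2).parts) from rfl]
    rw [Finset.prod_biUnion]
    intro x hx y hy hxy
    exact hdisj x hx y hy hxy

/-! ## Part 6 : the delta lemma -/

noncomputable def Eser : PowerSeries ℝ :=
  PowerSeries.mk fun d => if d = 0 then 0 else 1 / (d.factorial : ℝ)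

lemma Eser_const : PowerSeries.constantCoeff Eser = 0 := by
  rw [← PowerSeries.coeff_zero_eq_constantCoeff, Eser, PowerSeries.coeff_mk, if_pos rfl]

noncomputable def glog : ℕ → ℝ := fun k => if k = 0 then 0 else (-1 : ℝ)^(k-1)/k

lemma glog_shift : (fun k : ℕ => ((k : ℝ)+1) * glog (k+1)) = fun k : ℕ => (-1 : ℝ)^k := by
  funext k
  simp only [glog, Nat.add_sub_cancel, Nat.succ_ne_zero, if_false]
  have : ((k : ℝ) + 1) ≠ 0 := by positivity
  push_cast
  field_simp

lemma pc_glog_eser (m : ℕ) (hm : 1 ≤ m) :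
    pc glog Eser m = if m = 1 then 1 else 0 := by
  obtain ⟨m', rfl⟩ : ∃ m', m = m' + 1 := ⟨m - 1, by omega⟩
  have hder := pc_deriv glog Eser_const m'
  rw [glog_shift] at hder
  -- compute the RHS sum
  have hcoeff : ∀ j : ℕ, ((j:ℝ)+1) * PowerSeries.coeff (j+1) Eser = 1/(j.factorial : ℝ) := by
    intro j
    rw [Eser, PowerSeries.coeff_mk, if_neg (Nat.succ_ne_zero j), Nat.factorial_succ]
    push_cast
    have h1 : ((j:ℝ)+1) ≠ 0 := by positivity
    have h2 : ((j.factorial : ℝ)) ≠ 0 := by positivity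
    field_simp
  set T : ℕ → ℝ := pc (fun k => (-1:ℝ)^k) Eser with hT
  have key : ∑ j ∈ Finset.range (m'+1), ((j:ℝ)+1) * PowerSeries.coeff (j+1) Eser * T (m'-j)
      = if m' = 0 then 1 else 0 := by
    have split : ∀ j ∈ Finset.range (m'+1), ((j:ℝ)+1) * PowerSeries.coeff (j+1) Eser * T (m'-j)
        = (if j = 0 then 1 else 0) * T (m'-j) + PowerSeries.coeff j Eser * T (m'-j) := by
      intro j hj
      rw [hcoeff j]
      rcases Nat.eq_zero_or_pos j with rfl | hjpos
      · simp [Eser, PowerSeries.coeff_mk]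
      · rw [if_neg (by omega), Eser, PowerSeries.coeff_mk, if_neg (by omega)]
        ring
    rw [Finset.sum_congr rfl split, Finset.sum_add_distrib]
    have first : ∑ j ∈ Finset.range (m'+1), (if j = 0 then (1:ℝ) else 0) * T (m'-j) = T m' := by
      rw [Finset.sum_eq_single 0]
      · simp
      · intro b _ hb; rw [if_neg hb, zero_mul]
      · intro h; exact absurd (Finset.mem_range.2 (by omega)) h
    rw [first]
    -- second sum : ∑_j coeff_j E * T(m'-j) = ∑_k (-1)^k coeff_{m'} E^{k+1}
    have second : ∑ j ∈ Finset.range (m'+1), PowerSeries.coeff j Eser * T (m'-j)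
        = ∑ k ∈ Finset.range (m'+1), (-1:ℝ)^k * PowerSeries.coeff m' (Eser^(k+1)) := by
      have expand : ∀ j ∈ Finset.range (m'+1), PowerSeries.coeff j Eser * T (m'-j)
          = ∑ k ∈ Finset.range (m'+1),
              (-1:ℝ)^k * (PowerSeries.coeff j Eser * PowerSeries.coeff (m'-j) (Eser^k)) := by
        intro j hj
        rw [Finset.mem_range] at hj
        rw [hT, pc_stable _ Eser_const (show m'-j ≤ m' by omega), Finset.mul_sum]
        apply Finset.sum_congr rfl
        intro k _
        ring
      rw [Finset.sum_congr rfl expand, Finset.sum_comm]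
      apply Finset.sum_congr rfl
      intro k _
      rw [← Finset.mul_sum]
      congr 1
      rw [pow_succ']
      rw [PowerSeries.coeff_mul, Finset.Nat.sum_antidiagonal_eq_sum_range_succ_mk]
    rw [second, hT]
    -- telescoping
    have tel : ∑ k ∈ Finset.range (m'+1),
        ((-1:ℝ)^k * PowerSeries.coeff m' (Eser^k) - (-1:ℝ)^(k+1) * PowerSeries.coeff m' (Eser^(k+1)))
        = (-1:ℝ)^0 * PowerSeries.coeff m' (Eser^0) - (-1:ℝ)^(m'+1) * PowerSeries.coeff m' (Eser^(m'+1)) := by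
      exact Finset.sum_range_sub' (fun k => (-1:ℝ)^k * PowerSeries.coeff m' (Eser^k)) (m'+1)
    have combine : pc (fun k => (-1:ℝ)^k) Eser m' + ∑ k ∈ Finset.range (m'+1), (-1:ℝ)^k * PowerSeries.coeff m' (Eser^(k+1))
        = ∑ k ∈ Finset.range (m'+1),
          ((-1:ℝ)^k * PowerSeries.coeff m' (Eser^k) - (-1:ℝ)^(k+1) * PowerSeries.coeff m' (Eser^(k+1))) := by
      rw [pc, ← Finset.sum_add_distrib]
      apply Finset.sum_congr rfl
      intro k _
      ring
    rw [combine, tel]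
    rw [coeff_pow_eq_zero' Eser_const (show m' < m' + 1 by omega)]
    rw [pow_zero, pow_zero, one_mul, mul_zero, sub_zero, PowerSeries.coeff_one]
  rw [key] at hder
  have hne : ((m':ℝ)+1) ≠ 0 := by positivity
  have hpc : pc glog Eser (m'+1) = (if m' = 0 then (1:ℝ) else 0) / ((m':ℝ)+1) := by
    rw [eq_div_iff hne, mul_comm]
    exact hder
  rcases Nat.eq_zero_or_pos m' with rfl | hpos
  · rw [hpc]
    norm_num
  · rw [hpc, if_neg (Nat.pos_iff_ne_zero.1 hpos), if_neg (show ¬(m'+1 = 1) by omega), zero_div]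

/-! ## Part 7 : delta lemma, exp and log formulas -/

lemma delta_lemma {β : Type*} [DecidableEq β] (s : Finset β) (hs : s.Nonempty) :
    ∑ τ : Finpartition s, ((-1:ℝ))^(τ.parts.card - 1) * (((τ.parts.card - 1).factorial : ℝ))
      = if s.card = 1 then 1 else 0 := by
  have hm := master (F := Eser) Eser_const s.card glog s rfl
  have hcard : 0 < s.card := Finset.card_pos.2 hs
  rw [pc_glog_eser _ (by omega), PW] at hm
  have hterm : ∀ τ : Finpartition s,
      ((τ.parts.card.factorial : ℝ) * glog τ.parts.card) *
        ∏ B ∈ τ.parts, ((B.card.factorial : ℝ) * PowerSeries.coeff B.card Eser)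
      = (-1:ℝ)^(τ.parts.card - 1) * (((τ.parts.card - 1).factorial : ℝ)) := by
    intro τ
    have hsne : s ≠ ⊥ := by rw [Finset.bot_eq_empty]; exact hs.ne_empty
    have hpne : τ.parts.Nonempty := τ.parts_nonempty hsne
    obtain ⟨j, hj⟩ : ∃ j, τ.parts.card = j + 1 :=
      ⟨τ.parts.card - 1, by have := Finset.card_pos.2 hpne; omega⟩
    have hprod : ∏ B ∈ τ.parts, ((B.card.factorial : ℝ) * PowerSeries.coeff B.card Eser) = 1 := by
      apply Finset.prod_eq_one
      intro B hB
      have hBne : B.Nonempty := τ.nonempty_of_mem_parts hB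
      have hBc : B.card ≠ 0 := by
        have := Finset.card_pos.2 hBne; omega
      rw [Eser, PowerSeries.coeff_mk, if_neg hBc, mul_one_div, div_self (by positivity)]
    rw [hprod, mul_one, hj, glog, if_neg (Nat.succ_ne_zero j), Nat.add_sub_cancel,
      Nat.factorial_succ]
    push_cast
    have : ((j:ℝ)+1) ≠ 0 := by positivity
    field_simp
  have : ∑ τ : Finpartition s, ((-1:ℝ))^(τ.parts.card - 1) * (((τ.parts.card - 1).factorial : ℝ))
      = (s.card.factorial : ℝ) * (if s.card = 1 then 1 else 0) := by
    rw [hm]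
    exact Finset.sum_congr rfl fun τ _ => (hterm τ).symm
  rw [this]
  by_cases h1 : s.card = 1
  · rw [if_pos h1, h1]
    norm_num
  · rw [if_neg h1, mul_zero]

lemma coeff_fexp_s5 (F : PowerSeries ℝ) (n : ℕ) :
    PowerSeries.coeff n (fexp F) = pc (fun k => ((k.factorial : ℝ))⁻¹) F n := by
  rw [fexp, PowerSeries.coeff_mk, pc]
  apply Finset.sum_congr rfl
  intro k _
  rw [div_eq_mul_inv, mul_comm]

lemma exp_formula {α : Type*} [DecidableEq α] {F : PowerSeries ℝ}
    (hF : PowerSeries.constantCoeff F = 0) (s : Finset α) :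
    ((s.card.factorial : ℝ)) * PowerSeries.coeff s.card (fexp F)
      = ∑ π : Finpartition s,
          ∏ B ∈ π.parts, ((B.card.factorial : ℝ) * PowerSeries.coeff B.card F) := by
  rw [coeff_fexp_s5, master hF s.card _ s rfl, PW]
  apply Finset.sum_congr rfl
  intro π _
  show ((π.parts.card.factorial : ℝ) * ((π.parts.card.factorial : ℝ))⁻¹) * _ = _
  rw [mul_inv_cancel₀ (by positivity), one_mul]

open Classical in
lemma log_formula {α : Type*} [DecidableEq α] {F : PowerSeries ℝ}
    (hF : PowerSeries.constantCoeff F = 0) (s : Finset α) (hs : s.Nonempty) :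
    ((s.card.factorial : ℝ)) * PowerSeries.coeff s.card F
      = ∑ π : Finpartition s,
          ((-1:ℝ)^(π.parts.card - 1) * (((π.parts.card - 1).factorial : ℝ))) *
          ∏ B ∈ π.parts, ((B.card.factorial : ℝ) * PowerSeries.coeff B.card (fexp F)) := by
  classical
  have hsne : s ≠ ⊥ := by rw [Finset.bot_eq_empty]; exact hs.ne_empty
  -- expand each block coefficient by the exponential formula
  have step1 : ∀ π : Finpartition s,
      ∏ B ∈ π.parts, ((B.card.factorial : ℝ) * PowerSeries.coeff B.card (fexp F))
      = ∑ ρ : Finpartition s, (if ρ ≤ π then 1 else 0) *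
          ∏ C ∈ ρ.parts, ((C.card.factorial : ℝ) * PowerSeries.coeff C.card F) := by
    intro π
    rw [← bind_expansion (fun C => ((C.card.factorial : ℝ) * PowerSeries.coeff C.card F)) π]
    exact Finset.prod_congr rfl fun B _ => exp_formula hF B
  rw [Finset.sum_congr rfl (fun π (_ : π ∈ Finset.univ) => by rw [step1 π])]
  rw [Finset.sum_congr rfl (fun π (_ : π ∈ Finset.univ) => Finset.mul_sum ..)]
  rw [Finset.sum_comm]
  have step2 : ∀ ρ : Finpartition s,
      ∑ π : Finpartition s,
        ((-1:ℝ)^(π.parts.card - 1) * (((π.parts.card - 1).factorial : ℝ))) *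
          ((if ρ ≤ π then (1:ℝ) else 0) *
            ∏ C ∈ ρ.parts, ((C.card.factorial : ℝ) * PowerSeries.coeff C.card F))
      = (if ρ.parts.card = 1 then 1 else 0) *
          ∏ C ∈ ρ.parts, ((C.card.factorial : ℝ) * PowerSeries.coeff C.card F) := by
    intro ρ
    have swap : ∀ π : Finpartition s,
        ((-1:ℝ)^(π.parts.card - 1) * (((π.parts.card - 1).factorial : ℝ))) *
          ((if ρ ≤ π then (1:ℝ) else 0) *
            ∏ C ∈ ρ.parts, ((C.card.factorial : ℝ) * PowerSeries.coeff C.card F))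
        = ((if ρ ≤ π then (1:ℝ) else 0) *
            ((-1:ℝ)^(π.parts.card - 1) * (((π.parts.card - 1).factorial : ℝ)))) *
            ∏ C ∈ ρ.parts, ((C.card.factorial : ℝ) * PowerSeries.coeff C.card F) := by
      intro π; ring
    rw [Finset.sum_congr rfl (fun π _ => swap π), ← Finset.sum_mul]
    congr 1
    rw [coarsen_sum ρ (fun k => (-1:ℝ)^(k - 1) * (((k - 1).factorial : ℝ)))]
    have hρne : ρ.parts.Nonempty := ρ.parts_nonempty hsne
    exact delta_lemma ρ.parts hρne
  rw [Finset.sum_congr rfl (fun ρ (_ : ρ ∈ Finset.univ) => step2 ρ)]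
  -- only the indiscrete partition survives
  rw [Finset.sum_eq_single (Finpartition.indiscrete hsne)]
  · rw [Finpartition.indiscrete_parts, Finset.card_singleton, if_pos rfl, one_mul,
      Finset.prod_singleton]
  · intro ρ _ hρ
    rw [if_neg, zero_mul]
    intro hcard
    apply hρ
    obtain ⟨B, hB⟩ := Finset.card_eq_one.1 hcard
    have : B = s := by
      have := ρ.sup_parts
      rw [hB] at this
      simpa using this
    apply Finpartition.ext
    rw [hB, Finpartition.indiscrete_parts, this]
  · intro h
    exact absurd (Finset.mem_univ _) h


/-! ## Part 8 : auxiliary coefficient lemmas -/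

lemma evenSeries_const (x : ℕ → ℝ) : PowerSeries.constantCoeff (evenSeries x) = 0 := by
  rw [← PowerSeries.coeff_zero_eq_constantCoeff, evenSeries, PowerSeries.coeff_mk]
  simp

lemma constG (t : ℝ) (m : ℕ → ℝ) :
    PowerSeries.constantCoeff (PowerSeries.C t * evenSeries m) = 0 := by
  rw [map_mul, PowerSeries.constantCoeff_C, evenSeries_const, mul_zero]

lemma fG_eval (t : ℝ) (m : ℕ → ℝ) {d : ℕ} (hd : d ≠ 0) (he : d % 2 = 0) :
    (d.factorial : ℝ) * PowerSeries.coeff d (PowerSeries.C t * evenSeries m)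
    = 2 * t * (((d-1).factorial : ℝ)) * m (d/2) := by
  rw [PowerSeries.coeff_C_mul, evenSeries, PowerSeries.coeff_mk, if_pos ⟨hd, he⟩]
  have hq : 0 < d / 2 := by omega
  have hqR : ((d/2 : ℕ) : ℝ) ≠ 0 := by positivity
  have hdd : (d : ℝ) = 2 * ((d/2 : ℕ) : ℝ) := by
    have : d = 2 * (d/2) := by omega
    exact_mod_cast this
  have hfac : (d.factorial : ℝ) = (d : ℝ) * (((d-1).factorial : ℝ)) := by
    obtain ⟨e, rfl⟩ : ∃ e, d = e + 1 := ⟨d - 1, by omega⟩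
    rw [Nat.factorial_succ]
    push_cast
    simp
  rw [hfac, hdd]
  field_simp

lemma fG_eval_odd (t : ℝ) (m : ℕ → ℝ) {d : ℕ} (he : ¬ (d % 2 = 0)) :
    PowerSeries.coeff d (PowerSeries.C t * evenSeries m) = 0 := by
  rw [PowerSeries.coeff_C_mul, evenSeries, PowerSeries.coeff_mk, if_neg (by tauto), mul_zero]

lemma coeffH_eval (t u : ℝ) (a : ℕ → ℝ) {d : ℕ} (hd : d ≠ 0) (he : d % 2 = 0) :
    PowerSeries.coeff d (coeffSeriesTU t u a)
      = a (d/2) / (pochEval t (d/2) * pochEval u (d/2)) := by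
  rw [coeffSeriesTU, PowerSeries.coeff_mk, if_neg hd, if_pos he]

lemma coeffH_eval_odd (t u : ℝ) (a : ℕ → ℝ) {d : ℕ} (he : ¬ (d % 2 = 0)) :
    PowerSeries.coeff d (coeffSeriesTU t u a) = 0 := by
  have hd : d ≠ 0 := by omega
  rw [coeffSeriesTU, PowerSeries.coeff_mk, if_neg hd, if_neg he]

lemma coeffA_eval (a : ℕ → ℝ) {d : ℕ} (hd : d ≠ 0) (he : d % 2 = 0) :
    PowerSeries.coeff d (coeffSeries a) = a (d/2) := by
  rw [coeffSeries, PowerSeries.coeff_mk, if_neg hd, if_pos he]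


open Classical in
/-- Theorem 3.4 (second formula): cumulants in terms of moments. -/
theorem cumulant_in_terms_of_moments (t u : ℝ)
    (ht : ∀ i : ℕ, t + i ≠ 0) (hu : ∀ i : ℕ, u + i ≠ 0)
    (a κ m : ℕ → ℝ)
    (h1 : fexp (evenSeries κ) = coeffSeriesTU t u a)
    (h2 : fexp (PowerSeries.C t * evenSeries m) = coeffSeries a) :
    ∀ n : ℕ, 1 ≤ n →
      κ n = 1 / (2 * ((2 * n - 1).factorial : ℝ)) *
        ∑ σ ∈ evenPartitions (2 * n),
          ((2 * t) ^ σ.parts.card * (∏ V ∈ σ.parts, ((V.card - 1).factorial : ℝ)) *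
            ∑ π ∈ (evenPartitions (2 * n)).filter (fun π => IsRefinement π σ),
              ((-1 : ℝ) ^ (π.parts.card - 1) * ((π.parts.card - 1).factorial : ℝ)) /
                ∏ B ∈ π.parts, pochEval t (B.card / 2) * pochEval u (B.card / 2)) *
            ∏ V ∈ σ.parts, m (V.card / 2) := by
  intro n hn
  classical
  have hscard : (Finset.univ : Finset (Fin (2*n))).card = 2*n := by
    rw [Finset.card_univ, Fintype.card_fin]
  have hsne : (Finset.univ : Finset (Fin (2*n))).Nonempty := by
    rw [← Finset.card_pos, hscard]; omega
  have hFc : PowerSeries.constantCoeff (evenSeries κ) = 0 := evenSeries_const κ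
  have hGc := constG t m
  -- shorthand
  set w : ℕ → ℝ := fun k => (-1:ℝ)^(k - 1) * (((k - 1).factorial : ℝ)) with hw
  -- the "S" sum
  have hlog := log_formula hFc (Finset.univ : Finset (Fin (2*n))) hsne
  rw [hscard, h1] at hlog
  have hcoe : PowerSeries.coeff (2*n) (evenSeries κ) = κ n / n := by
    rw [evenSeries, PowerSeries.coeff_mk, if_pos ⟨by omega, by omega⟩]
    congr 2 <;> omega
  rw [hcoe] at hlog
  -- per-block exponential formula value
  have hblock : ∀ B : Finset (Fin (2*n)), B.card ≠ 0 → B.card % 2 = 0 →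
      (B.card.factorial : ℝ) * a (B.card / 2)
        = ∑ ρ : Finpartition B, ∏ C ∈ ρ.parts,
            ((C.card.factorial : ℝ) * PowerSeries.coeff C.card (PowerSeries.C t * evenSeries m)) := by
    intro B hB0 hBe
    rw [← coeffA_eval a hB0 hBe, ← h2]
    exact exp_formula hGc B
  -- step A : rewrite each σ-summand of the target
  have stepA : ∀ σ ∈ evenPartitions (2*n),
      ((2 * t) ^ σ.parts.card * (∏ V ∈ σ.parts, ((V.card - 1).factorial : ℝ)) *
        ∑ π ∈ (evenPartitions (2 * n)).filter (fun π => IsRefinement π σ),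
          ((-1 : ℝ) ^ (π.parts.card - 1) * ((π.parts.card - 1).factorial : ℝ)) /
            ∏ B ∈ π.parts, pochEval t (B.card / 2) * pochEval u (B.card / 2)) *
        ∏ V ∈ σ.parts, m (V.card / 2)
      = (∏ V ∈ σ.parts, ((V.card.factorial : ℝ) *
            PowerSeries.coeff V.card (PowerSeries.C t * evenSeries m))) *
        ∑ π ∈ evenPartitions (2*n), (if σ ≤ π then 1 else 0) *
          (w π.parts.card *
            (∏ B ∈ π.parts, pochEval t (B.card / 2) * pochEval u (B.card / 2))⁻¹) := by
    intro σ hσ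
    rw [evenPartitions, Finset.mem_filter] at hσ
    have heven := hσ.2
    have hprod : ∏ V ∈ σ.parts, ((V.card.factorial : ℝ) *
        PowerSeries.coeff V.card (PowerSeries.C t * evenSeries m))
        = (2 * t) ^ σ.parts.card * (∏ V ∈ σ.parts, ((V.card - 1).factorial : ℝ)) *
          ∏ V ∈ σ.parts, m (V.card / 2) := by
      rw [Finset.prod_congr rfl (fun V hV => by
        have hV0 : V.card ≠ 0 := by
          have := Finset.card_pos.2 (σ.nonempty_of_mem_parts hV); omega
        have hVe : V.card % 2 = 0 := Nat.even_iff.1 (heven V hV)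
        exact fG_eval t m hV0 hVe)]
      rw [Finset.prod_mul_distrib, Finset.prod_mul_distrib, Finset.prod_const]
      try ring
    rw [hprod]
    have hsum : ∑ π ∈ (evenPartitions (2 * n)).filter (fun π => IsRefinement π σ),
          ((-1 : ℝ) ^ (π.parts.card - 1) * ((π.parts.card - 1).factorial : ℝ)) /
            ∏ B ∈ π.parts, pochEval t (B.card / 2) * pochEval u (B.card / 2)
        = ∑ π ∈ evenPartitions (2*n), (if σ ≤ π then 1 else 0) *
          (w π.parts.card *
            (∏ B ∈ π.parts, pochEval t (B.card / 2) * pochEval u (B.card / 2))⁻¹) := by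
      rw [Finset.sum_filter]
      apply Finset.sum_congr rfl
      intro π _
      have hiff : IsRefinement π σ ↔ σ ≤ π := Iff.rfl
      by_cases hr : σ ≤ π
      · rw [if_pos (hiff.2 hr), if_pos hr, one_mul, hw, div_eq_mul_inv]
      · rw [if_neg (fun hc => hr (hiff.1 hc)), if_neg hr, zero_mul]
    rw [hsum]
    ring
  rw [Finset.sum_congr rfl stepA]
  -- step B : extend the σ-sum to all partitions
  have stepB : ∑ σ ∈ evenPartitions (2*n),
      ((∏ V ∈ σ.parts, ((V.card.factorial : ℝ) *
          PowerSeries.coeff V.card (PowerSeries.C t * evenSeries m))) *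
        ∑ π ∈ evenPartitions (2*n), (if σ ≤ π then 1 else 0) *
          (w π.parts.card *
            (∏ B ∈ π.parts, pochEval t (B.card / 2) * pochEval u (B.card / 2))⁻¹))
      = ∑ σ : Finpartition (Finset.univ : Finset (Fin (2*n))),
      ((∏ V ∈ σ.parts, ((V.card.factorial : ℝ) *
          PowerSeries.coeff V.card (PowerSeries.C t * evenSeries m))) *
        ∑ π ∈ evenPartitions (2*n), (if σ ≤ π then 1 else 0) *
          (w π.parts.card *
            (∏ B ∈ π.parts, pochEval t (B.card / 2) * pochEval u (B.card / 2))⁻¹)) := by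
    rw [evenPartitions]
    apply Finset.sum_subset (Finset.filter_subset _ _)
    intro σ _ hσ
    rw [Finset.mem_filter] at hσ
    push_neg at hσ
    have hodd : ∃ V ∈ σ.parts, ¬ Even V.card := by
      by_contra hcon
      push_neg at hcon
      exact hσ (Finset.mem_univ σ) hcon
    obtain ⟨V, hV, hVodd⟩ := hodd
    rw [Finset.prod_eq_zero hV, zero_mul]
    rw [fG_eval_odd t m (fun hc => hVodd (Nat.even_iff.2 hc)), mul_zero]
  rw [stepB]
  -- step C : swap the two sums
  have stepC : ∑ σ : Finpartition (Finset.univ : Finset (Fin (2*n))),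
      ((∏ V ∈ σ.parts, ((V.card.factorial : ℝ) *
          PowerSeries.coeff V.card (PowerSeries.C t * evenSeries m))) *
        ∑ π ∈ evenPartitions (2*n), (if σ ≤ π then 1 else 0) *
          (w π.parts.card *
            (∏ B ∈ π.parts, pochEval t (B.card / 2) * pochEval u (B.card / 2))⁻¹))
      = ∑ π ∈ evenPartitions (2*n),
          (w π.parts.card *
            (∏ B ∈ π.parts, pochEval t (B.card / 2) * pochEval u (B.card / 2))⁻¹) *
          ∑ σ : Finpartition (Finset.univ : Finset (Fin (2*n))),
            (if σ ≤ π then 1 else 0) *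
            ∏ V ∈ σ.parts, ((V.card.factorial : ℝ) *
              PowerSeries.coeff V.card (PowerSeries.C t * evenSeries m)) := by
    rw [Finset.sum_congr rfl (fun σ (_ : σ ∈ Finset.univ) => Finset.mul_sum ..)]
    rw [Finset.sum_comm]
    apply Finset.sum_congr rfl
    intro π _
    rw [Finset.mul_sum]
    apply Finset.sum_congr rfl
    intro σ _
    ring
  rw [stepC]
  -- step D : un-bind and un-exponential per coarse partition
  have stepD : ∀ π ∈ evenPartitions (2*n),
      (w π.parts.card *
        (∏ B ∈ π.parts, pochEval t (B.card / 2) * pochEval u (B.card / 2))⁻¹) *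
      (∑ σ : Finpartition (Finset.univ : Finset (Fin (2*n))),
        (if σ ≤ π then 1 else 0) *
        ∏ V ∈ σ.parts, ((V.card.factorial : ℝ) *
          PowerSeries.coeff V.card (PowerSeries.C t * evenSeries m)))
      = w π.parts.card * ∏ B ∈ π.parts,
          ((B.card.factorial : ℝ) * PowerSeries.coeff B.card (coeffSeriesTU t u a)) := by
    intro π hπ
    rw [evenPartitions, Finset.mem_filter] at hπ
    have heven := hπ.2
    rw [← bind_expansion (fun C => ((C.card.factorial : ℝ) *
      PowerSeries.coeff C.card (PowerSeries.C t * evenSeries m))) π]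
    have hB1 : ∀ B ∈ π.parts,
        (∑ ρ : Finpartition B, ∏ C ∈ ρ.parts,
          ((C.card.factorial : ℝ) * PowerSeries.coeff C.card (PowerSeries.C t * evenSeries m)))
        = (B.card.factorial : ℝ) * a (B.card / 2) := by
      intro B hB
      have hB0 : B.card ≠ 0 := by
        have := Finset.card_pos.2 (π.nonempty_of_mem_parts hB); omega
      exact (hblock B hB0 (Nat.even_iff.1 (heven B hB))).symm
    rw [Finset.prod_congr rfl hB1]
    have hHprod : ∏ B ∈ π.parts,
        ((B.card.factorial : ℝ) * PowerSeries.coeff B.card (coeffSeriesTU t u a))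
        = (∏ B ∈ π.parts, ((B.card.factorial : ℝ) * a (B.card / 2))) *
          (∏ B ∈ π.parts, pochEval t (B.card / 2) * pochEval u (B.card / 2))⁻¹ := by
      rw [← Finset.prod_inv_distrib, ← Finset.prod_mul_distrib]
      apply Finset.prod_congr rfl
      intro B hB
      have hB0 : B.card ≠ 0 := by
        have := Finset.card_pos.2 (π.nonempty_of_mem_parts hB); omega
      rw [coeffH_eval t u a hB0 (Nat.even_iff.1 (heven B hB)), div_eq_mul_inv]
      ring
    rw [hHprod]
    ring
  rw [Finset.sum_congr rfl stepD]
  -- step E : extend the π-sum to all partitions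
  have stepE : ∑ π ∈ evenPartitions (2*n), w π.parts.card * ∏ B ∈ π.parts,
        ((B.card.factorial : ℝ) * PowerSeries.coeff B.card (coeffSeriesTU t u a))
      = ∑ π : Finpartition (Finset.univ : Finset (Fin (2*n))), w π.parts.card * ∏ B ∈ π.parts,
        ((B.card.factorial : ℝ) * PowerSeries.coeff B.card (coeffSeriesTU t u a)) := by
    rw [evenPartitions]
    apply Finset.sum_subset (Finset.filter_subset _ _)
    intro π _ hπ
    rw [Finset.mem_filter] at hπ
    push_neg at hπ
    have hodd : ∃ B ∈ π.parts, ¬ Even B.card := by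
      by_contra hcon
      push_neg at hcon
      exact hπ (Finset.mem_univ π) hcon
    obtain ⟨B, hB, hBodd⟩ := hodd
    rw [Finset.prod_eq_zero hB, mul_zero]
    rw [coeffH_eval_odd t u a (fun hc => hBodd (Nat.even_iff.2 hc)), mul_zero]
  rw [stepE]
  -- identify with the log-formula sum
  have hfinal : ∑ π : Finpartition (Finset.univ : Finset (Fin (2*n))), w π.parts.card * ∏ B ∈ π.parts,
        ((B.card.factorial : ℝ) * PowerSeries.coeff B.card (coeffSeriesTU t u a))
      = ((2*n).factorial : ℝ) * (κ n / n) := by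
    rw [hlog]
  rw [hfinal]
  -- final arithmetic
  have hfac2n : ((2*n).factorial : ℝ) = (2*(n:ℝ)) * (((2*n-1).factorial : ℝ)) := by
    have h : (2*n).factorial = (2*n) * (2*n-1).factorial := by
      obtain ⟨e, he⟩ : ∃ e, 2*n = e + 1 := ⟨2*n - 1, by omega⟩
      calc (2*n).factorial = (e+1).factorial := by rw [he]
        _ = (e+1) * e.factorial := Nat.factorial_succ e
        _ = (2*n) * (2*n-1).factorial := by
            rw [show e = 2*n-1 by omega]
            congr 1
            omega
    rw [h]
    push_cast
    ring
  have hnne : (n : ℝ) ≠ 0 := by positivity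
  have hfacne : (((2*n-1).factorial : ℝ)) ≠ 0 := by positivity
  rw [hfac2n]
  field_simp
end
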